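/- arXiv:1406.3000 — 8 statements merged into one kernel-verified Lean document; each statement's English description precedes it below -/
import Mathlib

section
/- Let p ≥ 1, let (X,d) be a complete separable metric space and let m be a doubling Borel measure on X with constant C_D such that (X,d,m) supports a p-Poincaré inequality for Lipschitz functions with constants τ, Λ. Then there exists a constant C > 0, depending only on C_D, τ, Λ and p, such that for every Lipschitz function f : X → ℝ and all points x, y ∈ X, |f(x) − f(y)| ≤ C d(x,y) [ ( M_m(|∇f|^p)(x) )^{1/p} + ( M_m(|∇f|^p)(y) )^{1/p} ], where |∇f| is the slope of f and M_m is the maximal operator with respect to m. -/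
open MeasureTheory Metric Filter Topology
open scoped ENNReal NNReal

/-- The slope of `f : X → ℝ` at `x`:
`|∇f|(x) = limsup_{y → x, y ≠ x} |f y − f x| / d(y,x)` (junk value `0` at isolated points). -/
noncomputable def mslope {X : Type*} [MetricSpace X] (f : X → ℝ) (x : X) : ℝ :=
  Filter.limsup (fun y => |f y - f x| / dist y x) (𝓝[≠] x)

/-- The Hardy–Littlewood maximal function of `h` with respect to the measure `μ`:
`M_μ h (x) = ⨆ r > 0, ⨍_{B(x,r)} |h| dμ`. -/
noncomputable def maximalFn {X : Type*} [MetricSpace X] [MeasurableSpace X]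
    (μ : MeasureTheory.Measure X) (h : X → ℝ) (x : X) : ℝ≥0∞ :=
  ⨆ r ∈ Set.Ioi (0 : ℝ),
    (∫⁻ y in Metric.ball x r, ENNReal.ofReal |h y| ∂μ) / μ (Metric.ball x r)

lemma mslope_bounds {X : Type*} [MetricSpace X] (f : X → ℝ) (x : X) {L : ℝ≥0}
    (hf : LipschitzWith L f) : 0 ≤ mslope f x ∧ mslope f x ≤ L := by
  have key : ∀ y : X, 0 ≤ |f y - f x| / dist y x ∧ |f y - f x| / dist y x ≤ L := by
    intro y
    refine ⟨by positivity, ?_⟩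
    rcases eq_or_ne y x with rfl | hy
    · simp
    · rw [div_le_iff₀ (dist_pos.2 hy)]
      simpa [Real.dist_eq] using hf.dist_le_mul y x
  unfold mslope
  rcases eq_or_neBot (𝓝[≠] x) with h | h
  · have hset : {a : ℝ | ∀ᶠ n in (⊥ : Filter X), |f n - f x| / dist n x ≤ a} = Set.univ := by
      simp [Set.eq_univ_iff_forall]
    rw [h, limsup_eq, hset, Real.sInf_of_not_bddBelow not_bddBelow_univ]
    exact ⟨le_refl 0, by positivity⟩
  · constructor
    · refine le_limsup_of_frequently_le (Frequently.of_forall fun y => (key y).1) ?_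
      exact isBoundedUnder_of ⟨L, fun y => (key y).2⟩
    · exact limsup_le_of_le (isCoboundedUnder_le_of_le _ fun y => (key y).1)
        (Eventually.of_forall fun y => (key y).2)

lemma lipschitz_integrableOn {X : Type*} [MetricSpace X] [MeasurableSpace X] [BorelSpace X]
    (m : Measure X) {L : ℝ≥0} {f : X → ℝ} (hf : LipschitzWith L f)
    (x : X) (r : ℝ) (hfin : m (ball x r) ≠ ∞) : IntegrableOn f (ball x r) m := by
  refine Measure.integrableOn_of_bounded (M := |f x| + L * |r|) hfin
    hf.continuous.aestronglyMeasurable ?_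
  refine (ae_restrict_iff' measurableSet_ball).2 (Eventually.of_forall fun z hz => ?_)
  have h1 : |f z - f x| ≤ L * dist z x := by
    simpa [Real.dist_eq] using hf.dist_le_mul z x
  have h2 : dist z x < r := mem_ball.1 hz
  have h3 : (0:ℝ) ≤ dist z x := dist_nonneg
  have h4 : r ≤ |r| := le_abs_self r
  have h5 : (0:ℝ) ≤ (L:ℝ) := L.coe_nonneg
  have h7 : |f z| ≤ |f z - f x| + |f x| := by
    calc |f z| = |(f z - f x) + f x| := by ring_nf
    _ ≤ |f z - f x| + |f x| := abs_add_le _ _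
  have h6 : (L:ℝ) * dist z x ≤ L * |r| := by nlinarith
  simp only [Real.norm_eq_abs]
  linarith

lemma avg_bridge {X : Type*} [MetricSpace X] [MeasurableSpace X] (m : Measure X)
    {f : X → ℝ} {B B' : Set X} (hBB' : B ⊆ B')
    (hB0 : m B ≠ 0) (hB't : m B' ≠ ∞) (hint : IntegrableOn f B' m) :
    |(⨍ z in B, f z ∂m) - ⨍ z in B', f z ∂m| ≤
      (m B').toReal / (m B).toReal * ⨍ z in B', |f z - ⨍ w in B', f w ∂m| ∂m := by
  set c := ⨍ w in B', f w ∂m with hc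
  have hBt : m B ≠ ∞ := fun h => hB't (eq_top_mono (measure_mono hBB') h)
  have hB'0 : m B' ≠ 0 := fun h => hB0 (le_antisymm (h ▸ measure_mono hBB') zero_le)
  have ha : 0 < (m B).toReal := ENNReal.toReal_pos hB0 hBt
  have ha' : 0 < (m B').toReal := ENNReal.toReal_pos hB'0 hB't
  have hintB : IntegrableOn f B m := hint.mono_set hBB'
  have hconst : IntegrableOn (fun _ => c) B m :=
    integrableOn_const hBt
  have hsub : IntegrableOn (fun z => f z - c) B' m :=
    hint.sub (integrableOn_const hB't)
  have e1 : ∫ z in B, (f z - c) ∂m = ∫ z in B, f z ∂m - (m B).toReal * c := by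
    rw [integral_sub hintB hconst, setIntegral_const, smul_eq_mul, measureReal_def]
  have key : |∫ z in B, f z ∂m - (m B).toReal * c| ≤ ∫ z in B', |f z - c| ∂m := by
    rw [← e1]
    calc |∫ z in B, (f z - c) ∂m| ≤ ∫ z in B, |f z - c| ∂m := by
          simpa [Real.norm_eq_abs] using norm_integral_le_integral_norm (μ := m.restrict B)
            (fun z => f z - c)
    _ ≤ ∫ z in B', |f z - c| ∂m := by
          refine setIntegral_mono_set hsub.abs ?_ (HasSubset.Subset.eventuallyLE hBB')
          exact Filter.Eventually.of_forall fun z => abs_nonneg _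
  rw [setAverage_eq, setAverage_eq, smul_eq_mul, smul_eq_mul, measureReal_def, measureReal_def]
  have e2 : (m B).toReal⁻¹ * ∫ z in B, f z ∂m - c
      = (m B).toReal⁻¹ * (∫ z in B, f z ∂m - (m B).toReal * c) := by
    field_simp
  rw [e2, abs_mul, abs_of_pos (show (0:ℝ) < (m B).toReal⁻¹ by positivity)]
  have e3 : (m B').toReal / (m B).toReal * ((m B').toReal⁻¹ * ∫ z in B', |f z - c| ∂m)
      = (m B).toReal⁻¹ * ∫ z in B', |f z - c| ∂m := by
    field_simp
  rw [e3]
  exact mul_le_mul_of_nonneg_left key (by positivity)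

lemma avg_close {X : Type*} [MetricSpace X] [MeasurableSpace X] [BorelSpace X]
    (m : Measure X) {L : ℝ≥0} {f : X → ℝ} (hf : LipschitzWith L f)
    (x : X) (r : ℝ) (h0 : m (ball x r) ≠ 0) (hfin : m (ball x r) ≠ ∞) :
    |(⨍ z in ball x r, f z ∂m) - f x| ≤ L * r := by
  set B := ball x r
  have ha : 0 < (m B).toReal := ENNReal.toReal_pos h0 hfin
  have hintB : IntegrableOn f B m := lipschitz_integrableOn m hf x r hfin
  have hconst : IntegrableOn (fun _ => f x) B m := integrableOn_const hfin
  have key : |∫ z in B, (f z - f x) ∂m| ≤ (L * r) * (m B).toReal := by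
    calc |∫ z in B, (f z - f x) ∂m| ≤ ∫ z in B, |f z - f x| ∂m := by
          simpa [Real.norm_eq_abs] using norm_integral_le_integral_norm (μ := m.restrict B)
            (fun z => f z - f x)
    _ ≤ ∫ _ in B, (L * r : ℝ) ∂m := by
          refine setIntegral_mono_on (hintB.sub hconst).abs
            (integrableOn_const hfin) measurableSet_ball fun z hz => ?_
          have h1 : |f z - f x| ≤ L * dist z x := by
            simpa [Real.dist_eq] using hf.dist_le_mul z x
          have h2 : dist z x < r := mem_ball.1 hz
          nlinarith [dist_nonneg (x := z) (y := x), L.coe_nonneg]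
    _ = (L * r) * (m B).toReal := by rw [setIntegral_const, smul_eq_mul, measureReal_def]; ring
  have e1 : ∫ z in B, (f z - f x) ∂m = ∫ z in B, f z ∂m - (m B).toReal * f x := by
    rw [integral_sub hintB hconst, setIntegral_const, smul_eq_mul, measureReal_def]
  have e2 : (⨍ z in B, f z ∂m) - f x
      = (m B).toReal⁻¹ * (∫ z in B, f z ∂m - (m B).toReal * f x) := by
    rw [setAverage_eq, smul_eq_mul, measureReal_def]
    field_simp
  rw [e2, abs_mul, abs_of_pos (show (0:ℝ) < (m B).toReal⁻¹ by positivity), ← e1]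
  calc (m B).toReal⁻¹ * |∫ z in B, (f z - f x) ∂m|
      ≤ (m B).toReal⁻¹ * ((L * r) * (m B).toReal) :=
        mul_le_mul_of_nonneg_left key (by positivity)
    _ = L * r := by field_simp

lemma avg_le_maximal {X : Type*} [MetricSpace X] [MeasurableSpace X]
    (m : Measure X) {g : X → ℝ} (hg : ∀ z, 0 ≤ g z) (x : X) (s : ℝ) (hs : 0 < s)
    (hM : maximalFn m g x ≠ ∞) :
    ⨍ z in ball x s, g z ∂m ≤ (maximalFn m g x).toReal := by
  by_cases hint : IntegrableOn g (ball x s) m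
  · have h0 : 0 ≤ ⨍ z in ball x s, g z ∂m := by
      rw [setAverage_eq, smul_eq_mul]
      have h := integral_nonneg (μ := m.restrict (ball x s)) (show 0 ≤ g from hg)
      positivity
    have key : ENNReal.ofReal (⨍ z in ball x s, g z ∂m) ≤ maximalFn m g x := by
      rw [ofReal_setAverage hint (Filter.Eventually.of_forall fun z => hg z)]
      have e : (∫⁻ z in ball x s, ENNReal.ofReal (g z) ∂m)
          = ∫⁻ z in ball x s, ENNReal.ofReal |g z| ∂m :=
        lintegral_congr fun z => by rw [abs_of_nonneg (hg z)]
      rw [e]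
      exact le_biSup (f := fun r => (∫⁻ y in ball x r, ENNReal.ofReal |g y| ∂m) / m (ball x r))
        (Set.mem_Ioi.2 hs)
    calc ⨍ z in ball x s, g z ∂m
        = (ENNReal.ofReal (⨍ z in ball x s, g z ∂m)).toReal := by
          rw [ENNReal.toReal_ofReal h0]
      _ ≤ (maximalFn m g x).toReal := ENNReal.toReal_mono hM key
  · rw [setAverage_eq, integral_undef hint, smul_zero]
    exact ENNReal.toReal_nonneg

lemma setAvg_nonneg {X : Type*} [MetricSpace X] [MeasurableSpace X] (m : Measure X)
    {g : X → ℝ} (hg : ∀ z, 0 ≤ g z) (s : Set X) : 0 ≤ ⨍ z in s, g z ∂m := by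
  rw [setAverage_eq, smul_eq_mul]
  have h := integral_nonneg (μ := m.restrict s) (show 0 ≤ g from hg)
  positivity

section Chain
variable {X : Type} [MetricSpace X] [MeasurableSpace X] [BorelSpace X]

/-- The Poincaré inequality with RHS bounded by the maximal function. -/
lemma PI_max (m : Measure X) {p τ Λ : ℝ} (hp : 1 ≤ p) (hτ : 0 < τ) (hΛ : 0 < Λ)
    (hPI : ∀ f : X → ℝ, (∃ L, LipschitzWith L f) → ∀ (x : X) (r : ℝ), 0 < r →
        ⨍ y in ball x r, |f y - ⨍ z in ball x r, f z ∂m| ∂m ≤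
          τ * r * (⨍ y in ball x (Λ * r), mslope f y ^ p ∂m) ^ (1 / p))
    {L : ℝ≥0} {f : X → ℝ} (hf : LipschitzWith L f) (x : X) (r : ℝ) (hr : 0 < r)
    (hM : maximalFn m (fun z => mslope f z ^ p) x ≠ ∞) :
    ⨍ y in ball x r, |f y - ⨍ z in ball x r, f z ∂m| ∂m ≤
      τ * r * (maximalFn m (fun z => mslope f z ^ p) x).toReal ^ (1 / p) := by
  have hg : ∀ z, 0 ≤ mslope f z ^ p := fun z => Real.rpow_nonneg (mslope_bounds f z hf).1 p
  refine (hPI f ⟨L, hf⟩ x r hr).trans ?_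
  have havg := avg_le_maximal m hg x (Λ * r) (by positivity) hM
  have h0 : 0 ≤ ⨍ y in ball x (Λ * r), mslope f y ^ p ∂m := setAvg_nonneg m hg _
  exact mul_le_mul_of_nonneg_left (Real.rpow_le_rpow h0 havg (by positivity)) (by positivity)

lemma chain (m : Measure X) {p C_D τ Λ : ℝ} (hp : 1 ≤ p) (hCD : 0 < C_D) (hτ : 0 < τ)
    (hΛ : 0 < Λ)
    (hball : ∀ (x : X) (r : ℝ), 0 < r → 0 < m (ball x r) ∧ m (ball x r) < ⊤)
    (hdbl : ∀ (x : X) (r : ℝ), 0 < r →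
      m (ball x (2 * r)) ≤ ENNReal.ofReal C_D * m (ball x r))
    (hPI : ∀ f : X → ℝ, (∃ L, LipschitzWith L f) → ∀ (x : X) (r : ℝ), 0 < r →
        ⨍ y in ball x r, |f y - ⨍ z in ball x r, f z ∂m| ∂m ≤
          τ * r * (⨍ y in ball x (Λ * r), mslope f y ^ p ∂m) ^ (1 / p))
    {L : ℝ≥0} {f : X → ℝ} (hf : LipschitzWith L f) (x : X) (R : ℝ) (hR : 0 < R)
    (hM : maximalFn m (fun z => mslope f z ^ p) x ≠ ∞) :
    |f x - ⨍ z in ball x (2 * R), f z ∂m| ≤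
      4 * C_D * τ * R * (maximalFn m (fun z => mslope f z ^ p) x).toReal ^ (1 / p) := by
  set M' : ℝ := (maximalFn m (fun z => mslope f z ^ p) x).toReal ^ (1 / p) with hM'
  have hM'0 : 0 ≤ M' := Real.rpow_nonneg ENNReal.toReal_nonneg _
  set rr : ℕ → ℝ := fun i => (2 * R) * (2⁻¹:ℝ)^i with hrr
  have hrpos : ∀ i, 0 < rr i := fun i => by positivity
  have hrad : ∀ i, rr i = 2 * rr (i+1) := fun i => by
    simp only [hrr, pow_succ]; ring
  set a : ℕ → ℝ := fun i => ⨍ z in ball x (rr i), f z ∂m with ha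
  -- the one-step bound
  have step : ∀ i, |a (i+1) - a i| ≤ C_D * (τ * rr i * M') := by
    intro i
    have h1 := (hball x (rr (i+1)) (hrpos (i+1))).1.ne'
    have h2 := (hball x (rr i) (hrpos i)).2.ne
    have h2' := (hball x (rr i) (hrpos i)).1.ne'
    have h3 := (hball x (rr (i+1)) (hrpos (i+1))).2.ne
    have hsub : ball x (rr (i+1)) ⊆ ball x (rr i) :=
      ball_subset_ball (by rw [hrad i]; nlinarith [hrpos (i+1)])
    have hbr := avg_bridge m hsub h1 h2 (lipschitz_integrableOn m hf x (rr i) h2)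
    have hratio : (m (ball x (rr i))).toReal / (m (ball x (rr (i+1)))).toReal ≤ C_D := by
      rw [div_le_iff₀ (ENNReal.toReal_pos h1 h3)]
      have hd : m (ball x (rr i)) ≤ ENNReal.ofReal C_D * m (ball x (rr (i+1))) := by
        rw [hrad i]; exact hdbl x (rr (i+1)) (hrpos (i+1))
      calc (m (ball x (rr i))).toReal
          ≤ (ENNReal.ofReal C_D * m (ball x (rr (i+1)))).toReal :=
            ENNReal.toReal_mono (by finiteness) hd
        _ = C_D * (m (ball x (rr (i+1)))).toReal := by
            rw [ENNReal.toReal_mul, ENNReal.toReal_ofReal hCD.le]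
    have hPIi := PI_max m hp hτ hΛ hPI hf x (rr i) (hrpos i) hM
    have havg0 : 0 ≤ ⨍ z in ball x (rr i), |f z - ⨍ w in ball x (rr i), f w ∂m| ∂m :=
      setAvg_nonneg m (fun z => abs_nonneg _) _
    calc |a (i+1) - a i| ≤ (m (ball x (rr i))).toReal / (m (ball x (rr (i+1)))).toReal *
          ⨍ z in ball x (rr i), |f z - ⨍ w in ball x (rr i), f w ∂m| ∂m := hbr
      _ ≤ C_D * (τ * rr i * M') := by
          apply mul_le_mul hratio hPIi havg0 hCD.le
  -- telescoping
  have tele : ∀ n, |f x - a 0| ≤ |f x - a n| + ∑ i ∈ Finset.range n, |a (i+1) - a i| := by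
    intro n
    induction n with
    | zero => simp
    | succ n ih =>
      rw [Finset.sum_range_succ]
      have tri : |f x - a n| ≤ |f x - a (n+1)| + |a (n+1) - a n| := by
        calc |f x - a n| = |(f x - a (n+1)) + (a (n+1) - a n)| := by ring_nf
          _ ≤ _ := abs_add_le _ _
      linarith
  have sumb : ∀ n, ∑ i ∈ Finset.range n, |a (i+1) - a i| ≤ 4 * C_D * τ * R * M' := by
    intro n
    calc ∑ i ∈ Finset.range n, |a (i+1) - a i|
        ≤ ∑ i ∈ Finset.range n, C_D * (τ * rr i * M') :=
          Finset.sum_le_sum fun i _ => step i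
      _ = (C_D * (τ * (2 * R) * M')) * ∑ i ∈ Finset.range n, (1 / 2 : ℝ)^i := by
          rw [Finset.mul_sum]
          exact Finset.sum_congr rfl fun i _ => by simp only [hrr, one_div]; ring
      _ ≤ (C_D * (τ * (2 * R) * M')) * 2 := by
          apply mul_le_mul_of_nonneg_left (sum_geometric_two_le n) (by positivity)
      _ = 4 * C_D * τ * R * M' := by ring
  have bound : ∀ n, |f x - a 0| ≤ (L : ℝ) * rr n + 4 * C_D * τ * R * M' := by
    intro n
    have hc := avg_close m hf x (rr n)
      (hball x (rr n) (hrpos n)).1.ne' (hball x (rr n) (hrpos n)).2.ne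
    rw [abs_sub_comm] at hc
    have ht := tele n
    have hs := sumb n
    linarith
  have hlim : Tendsto (fun n : ℕ => (L : ℝ) * rr n + 4 * C_D * τ * R * M') atTop
      (𝓝 (4 * C_D * τ * R * M')) := by
    have h1 : Tendsto (fun n : ℕ => ((2⁻¹:ℝ))^n) atTop (𝓝 0) :=
      tendsto_pow_atTop_nhds_zero_of_lt_one (by norm_num) (by norm_num)
    have h2 : Tendsto (fun n : ℕ => (L : ℝ) * rr n) atTop (𝓝 0) := by
      have h3 := h1.const_mul ((L : ℝ) * (2 * R))
      rw [mul_zero] at h3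
      exact h3.congr fun n => by simp only [hrr]; ring
    have h4 := h2.add_const (4 * C_D * τ * R * M')
    rwa [zero_add] at h4
  have final : |f x - a 0| ≤ 4 * C_D * τ * R * M' :=
    ge_of_tendsto hlim (Filter.Eventually.of_forall bound)
  have ha0 : a 0 = ⨍ z in ball x (2 * R), f z ∂m := by
    simp only [ha, hrr, pow_zero, mul_one]
  rwa [ha0] at final
end Chain

/-- If `(X,d,m)` is a complete separable doubling metric measure space
(doubling constant `C_D`) supporting a `p`-Poincaré inequality for Lipschitz functions with
constants `τ, Λ` for some `p ≥ 1`, then there is `C > 0` depending only on `C_D, τ, Λ, p`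
such that for every Lipschitz `f : X → ℝ` and all `x, y ∈ X`,
`|f x − f y| ≤ C d(x,y) ((M_m(|∇f|^p) x)^{1/p} + (M_m(|∇f|^p) y)^{1/p})`. -/
theorem stmt1 (p C_D τ Λ : ℝ) (hp : 1 ≤ p) (hCD : 0 < C_D) (hτ : 0 < τ) (hΛ : 0 < Λ) :
    ∃ C : ℝ, 0 < C ∧
      ∀ (X : Type) [MetricSpace X] [MeasurableSpace X] [BorelSpace X],
        CompleteSpace X → TopologicalSpace.SeparableSpace X →
        ∀ (m : MeasureTheory.Measure X),
        -- `m` is doubling with constant `C_D`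
        (∀ (x : X) (r : ℝ), 0 < r → 0 < m (Metric.ball x r) ∧ m (Metric.ball x r) < ⊤) →
        (∀ (x : X) (r : ℝ), 0 < r →
            m (Metric.ball x (2 * r)) ≤ ENNReal.ofReal C_D * m (Metric.ball x r)) →
        -- `(X,d,m)` supports a `p`-Poincaré inequality for Lipschitz functions
        (∀ f : X → ℝ, (∃ L, LipschitzWith L f) → ∀ (x : X) (r : ℝ), 0 < r →
            ⨍ y in Metric.ball x r, |f y - ⨍ z in Metric.ball x r, f z ∂m| ∂m ≤
              τ * r * (⨍ y in Metric.ball x (Λ * r), mslope f y ^ p ∂m) ^ (1 / p)) →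
        -- conclusion
        ∀ f : X → ℝ, (∃ L, LipschitzWith L f) → ∀ x y : X,
          ENNReal.ofReal |f x - f y| ≤
            ENNReal.ofReal (C * dist x y) *
              ((maximalFn m (fun z => mslope f z ^ p) x) ^ (1 / p) +
                (maximalFn m (fun z => mslope f z ^ p) y) ^ (1 / p)) := by
  refine ⟨12 * τ * (C_D + 1) ^ 2, by positivity, ?_⟩
  intro X _ _ _ _ _ m hball hdbl hPI f hfex x y
  obtain ⟨L, hL⟩ := hfex
  set C : ℝ := 12 * τ * (C_D + 1) ^ 2 with hC
  have hCpos : 0 < C := by positivity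
  set g : X → ℝ := fun z => mslope f z ^ p with hg
  have hp1 : 0 < 1 / p := by positivity
  rcases eq_or_ne x y with rfl | hxy
  · simp
  have hd : 0 < dist x y := dist_pos.2 hxy
  by_cases hMx : maximalFn m g x = ∞
  · have h1 : maximalFn m g x ^ (1/p) = ∞ := by
      rw [hMx]; exact ENNReal.top_rpow_of_pos hp1
    rw [h1, top_add, ENNReal.mul_top (by simp [ENNReal.ofReal_eq_zero]; nlinarith)]
    exact le_top
  by_cases hMy : maximalFn m g y = ∞
  · have h1 : maximalFn m g y ^ (1/p) = ∞ := by
      rw [hMy]; exact ENNReal.top_rpow_of_pos hp1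
    rw [h1, add_top, ENNReal.mul_top (by simp [ENNReal.ofReal_eq_zero]; nlinarith)]
    exact le_top
  -- main case
  set R : ℝ := dist x y with hRdef
  set Mx' : ℝ := (maximalFn m g x).toReal ^ (1 / p) with hMx'
  set My' : ℝ := (maximalFn m g y).toReal ^ (1 / p) with hMy'
  have hMx'0 : 0 ≤ Mx' := Real.rpow_nonneg ENNReal.toReal_nonneg _
  have hMy'0 : 0 ≤ My' := Real.rpow_nonneg ENNReal.toReal_nonneg _
  have h1 := chain m hp hCD hτ hΛ hball hdbl hPI hL x R hd hMx
  have h2 := chain m hp hCD hτ hΛ hball hdbl hPI hL y (2 * R) (by positivity) hMy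
  -- bridge between ball x (2R) and ball y (4R)
  have hsub : ball x (2 * R) ⊆ ball y (2 * (2 * R)) := by
    intro z hz
    have hz' : dist z x < 2 * R := mem_ball.1 hz
    have : dist z y ≤ dist z x + dist x y := dist_triangle z x y
    rw [mem_ball]
    rw [hRdef] at *
    linarith
  have hsub2 : ball y (2 * (2 * R)) ⊆ ball x (2 * (2 * (2 * R))) := by
    intro z hz
    have hz' : dist z y < 2 * (2 * R) := mem_ball.1 hz
    have h' : dist z x ≤ dist z y + dist y x := dist_triangle z y x
    rw [dist_comm y x] at h'
    rw [mem_ball]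
    rw [hRdef] at *
    linarith
  have hB0 := (hball x (2 * R) (by positivity)).1.ne'
  have hBt := (hball x (2 * R) (by positivity)).2.ne
  have hB'0 := (hball y (2 * (2 * R)) (by positivity)).1.ne'
  have hB't := (hball y (2 * (2 * R)) (by positivity)).2.ne
  have hintB' : IntegrableOn f (ball y (2 * (2 * R))) m :=
    lipschitz_integrableOn m hL y (2 * (2 * R)) hB't
  have hbr := avg_bridge m hsub hB0 hB't hintB'
  have hratio : (m (ball y (2 * (2 * R)))).toReal / (m (ball x (2 * R))).toReal
      ≤ C_D * C_D := by
    rw [div_le_iff₀ (ENNReal.toReal_pos hB0 hBt)]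
    have hd1 : m (ball y (2 * (2 * R))) ≤
        ENNReal.ofReal C_D * (ENNReal.ofReal C_D * m (ball x (2 * R))) := by
      calc m (ball y (2 * (2 * R))) ≤ m (ball x (2 * (2 * (2 * R)))) := measure_mono hsub2
        _ ≤ ENNReal.ofReal C_D * m (ball x (2 * (2 * R))) :=
            hdbl x (2 * (2 * R)) (by positivity)
        _ ≤ ENNReal.ofReal C_D * (ENNReal.ofReal C_D * m (ball x (2 * R))) :=
            mul_le_mul_right (hdbl x (2 * R) (by positivity)) _
    calc (m (ball y (2 * (2 * R)))).toReal
        ≤ (ENNReal.ofReal C_D * (ENNReal.ofReal C_D * m (ball x (2 * R)))).toReal :=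
          ENNReal.toReal_mono (by finiteness) hd1
      _ = C_D * C_D * (m (ball x (2 * R))).toReal := by
          rw [ENNReal.toReal_mul, ENNReal.toReal_mul, ENNReal.toReal_ofReal hCD.le]; ring
  have hPIy := PI_max m hp hτ hΛ hPI hL y (2 * (2 * R)) (by positivity) hMy
  have havg0 : 0 ≤ ⨍ z in ball y (2 * (2 * R)),
      |f z - ⨍ w in ball y (2 * (2 * R)), f w ∂m| ∂m :=
    setAvg_nonneg m (fun z => abs_nonneg _) _
  have h3 : |(⨍ z in ball x (2 * R), f z ∂m) - ⨍ z in ball y (2 * (2 * R)), f z ∂m| ≤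
      (C_D * C_D) * (τ * (2 * (2 * R)) * My') := by
    calc |(⨍ z in ball x (2 * R), f z ∂m) - ⨍ z in ball y (2 * (2 * R)), f z ∂m|
        ≤ (m (ball y (2 * (2 * R)))).toReal / (m (ball x (2 * R))).toReal *
          ⨍ z in ball y (2 * (2 * R)), |f z - ⨍ w in ball y (2 * (2 * R)), f w ∂m| ∂m := hbr
      _ ≤ (C_D * C_D) * (τ * (2 * (2 * R)) * My') :=
          mul_le_mul hratio hPIy havg0 (by positivity)
  -- combine
  set A : ℝ := ⨍ z in ball x (2 * R), f z ∂m with hA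
  set A' : ℝ := ⨍ z in ball y (2 * (2 * R)), f z ∂m with hA'
  have htri : |f x - f y| ≤ |f x - A| + |A - A'| + |A' - f y| := by
    calc |f x - f y| = |(f x - A) + (A - A') + (A' - f y)| := by ring_nf
      _ ≤ _ := abs_add_three _ _ _
  rw [abs_sub_comm] at h2
  have e1 : 4 * C_D * τ ≤ C := by nlinarith
  have e2 : 4 * (C_D * C_D) * τ + 8 * C_D * τ ≤ C := by nlinarith
  have p1 : 4 * C_D * τ * (R * Mx') ≤ C * (R * Mx') :=
    mul_le_mul_of_nonneg_right e1 (by positivity)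
  have p2 : (4 * (C_D * C_D) * τ + 8 * C_D * τ) * (R * My') ≤ C * (R * My') :=
    mul_le_mul_of_nonneg_right e2 (by positivity)
  have habs : |f x - f y| ≤ C * R * (Mx' + My') := by nlinarith [h1, h2, h3, htri]
  -- wrap in ENNReal
  have hofx : ENNReal.ofReal Mx' = maximalFn m g x ^ (1/p) := by
    rw [hMx', ENNReal.toReal_rpow]
    exact ENNReal.ofReal_toReal (ENNReal.rpow_ne_top_of_nonneg hp1.le hMx)
  have hofy : ENNReal.ofReal My' = maximalFn m g y ^ (1/p) := by
    rw [hMy', ENNReal.toReal_rpow]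
    exact ENNReal.ofReal_toReal (ENNReal.rpow_ne_top_of_nonneg hp1.le hMy)
  calc ENNReal.ofReal |f x - f y| ≤ ENNReal.ofReal (C * R * (Mx' + My')) :=
        ENNReal.ofReal_le_ofReal habs
    _ = ENNReal.ofReal (C * R) * ENNReal.ofReal (Mx' + My') := by
        rw [ENNReal.ofReal_mul (by positivity)]
    _ = ENNReal.ofReal (C * R) * (ENNReal.ofReal Mx' + ENNReal.ofReal My') := by
        rw [ENNReal.ofReal_add hMx'0 hMy'0]
    _ = ENNReal.ofReal (C * dist x y) *
          (maximalFn m g x ^ (1/p) + maximalFn m g y ^ (1/p)) := by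
        rw [hofx, hofy, hRdef]
end

section
/- Let (X, Σ, μ) be a measure space, let g : X → (0,∞) be measurable, let A, B : X → [0,∞] be measurable, and let C > 0 be such that for every λ > 0, ∫_{{g ≤ λ}} A dμ ≤ C λ ∫_{{g > λ}} B dμ. Let f : (0,∞) → (0,∞) be continuously differentiable and strictly decreasing with f(λ) → 0 as λ → ∞, and assume that Φ(t) := ∫_0^t λ (−f'(λ)) dλ is finite for every t > 0. Then ∫_X f(g) A dμ ≤ C ∫_X Φ(g) B dμ, as an inequality in [0,∞]. -/
open MeasureTheory Filter Topology
open scoped ENNReal NNReal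

namespace Stmt8Aux

open Set

lemma two_pow_pos' (n : ℕ) : (0:ℝ) < 2 ^ n := by positivity

/-- Dyadic ceiling of `t` at scale `2^(-n)`. -/
noncomputable def dC (n : ℕ) (t : ℝ) : ℝ := (⌈t * 2 ^ n⌉ : ℝ) / 2 ^ n

lemma le_dC (n : ℕ) (t : ℝ) : t ≤ dC n t := by
  rw [dC, le_div_iff₀ (two_pow_pos' n)]
  exact Int.le_ceil _

lemma dC_lt (n : ℕ) (t : ℝ) : dC n t < t + (2 ^ n)⁻¹ := by
  rw [dC, div_lt_iff₀ (two_pow_pos' n)]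
  have h := Int.ceil_lt_add_one (t * 2 ^ n)
  have h2 : (t + (2 ^ n)⁻¹) * 2 ^ n = t * 2 ^ n + 1 := by
    field_simp
  linarith

lemma dC_anti (t : ℝ) : Antitone fun n => dC n t := by
  refine antitone_nat_of_succ_le fun n => ?_
  rw [dC, dC, div_le_div_iff₀ (two_pow_pos' (n+1)) (two_pow_pos' n)]
  have hint : ⌈t * 2 ^ (n+1)⌉ ≤ 2 * ⌈t * 2 ^ n⌉ := by
    rw [Int.ceil_le]
    push_cast
    have h := Int.le_ceil (t * 2 ^ n)
    have e : t * 2 ^ (n+1) = 2 * (t * 2 ^ n) := by ring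
    linarith
  have h1 : (⌈t * 2 ^ (n+1)⌉ : ℝ) ≤ 2 * (⌈t * 2 ^ n⌉ : ℝ) := by exact_mod_cast hint
  calc (⌈t * 2 ^ (n+1)⌉ : ℝ) * 2 ^ n ≤ (2 * (⌈t * 2 ^ n⌉ : ℝ)) * 2 ^ n :=
        mul_le_mul_of_nonneg_right h1 (two_pow_pos' n).le
    _ = (⌈t * 2 ^ n⌉ : ℝ) * 2 ^ (n+1) := by ring

lemma dC_meas (n : ℕ) : Measurable (dC n) := by
  have h1 : Measurable fun t : ℝ => (⌈t * 2 ^ n⌉ : ℝ) :=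
    Measurable.comp (measurable_from_top : Measurable (Int.cast : ℤ → ℝ))
      ((measurable_id.mul_const _).ceil)
  exact h1.div_const _

lemma dC_le_grid {n i : ℕ} {t : ℝ} (h : t ≤ (i:ℝ)/2^n) : dC n t ≤ (i:ℝ)/2^n := by
  rw [dC, div_le_div_iff₀ (two_pow_pos' n) (two_pow_pos' n)]
  have ht : t * 2 ^ n ≤ (i:ℝ) := by
    rw [le_div_iff₀ (two_pow_pos' n)] at h
    exact h
  have : ⌈t * 2 ^ n⌉ ≤ (i : ℤ) := Int.ceil_le.2 (by exact_mod_cast ht)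
  have : (⌈t * 2 ^ n⌉ : ℝ) ≤ (i : ℝ) := by exact_mod_cast this
  nlinarith [two_pow_pos' n]

lemma dC_eq_on (n i : ℕ) {l : ℝ} (hl : l ∈ Ioc ((i:ℝ)/2^n) (((i:ℝ)+1)/2^n)) :
    dC n l = ((i:ℝ)+1)/2^n := by
  obtain ⟨h1, h2⟩ := hl
  have h1' : (i:ℝ) < l * 2 ^ n := by
    rw [div_lt_iff₀ (two_pow_pos' n)] at h1
    linarith
  have h2' : l * 2 ^ n ≤ (i:ℝ) + 1 := by
    rw [le_div_iff₀ (two_pow_pos' n)] at h2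
    linarith
  have hceil : ⌈l * 2 ^ n⌉ = (i : ℤ) + 1 := by
    rw [Int.ceil_eq_iff]
    constructor <;> push_cast <;> linarith
  rw [dC, hceil]
  push_cast
  ring

lemma iUnion_Ioc_grid (n : ℕ) :
    ⋃ i : ℕ, Ioc ((i:ℝ)/2^n) (((i:ℝ)+1)/2^n) = Ioi (0:ℝ) := by
  ext l
  simp only [mem_iUnion, mem_Ioc, mem_Ioi]
  constructor
  · rintro ⟨i, h1, _⟩
    have : (0:ℝ) ≤ (i:ℝ)/2^n := by positivity
    linarith
  · intro hl
    have hpos : 0 < l * 2 ^ n := by positivity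
    have hceil : 1 ≤ ⌈l * 2 ^ n⌉ := Int.ceil_pos.2 hpos
    have hcast : (((⌈l * 2 ^ n⌉ - 1).toNat : ℕ) : ℝ) = (⌈l * 2 ^ n⌉ : ℝ) - 1 := by
      have h1 : ((⌈l * 2 ^ n⌉ - 1).toNat : ℤ) = ⌈l * 2 ^ n⌉ - 1 := Int.toNat_of_nonneg (by omega)
      exact_mod_cast congrArg (Int.cast : ℤ → ℝ) h1
    refine ⟨(⌈l * 2 ^ n⌉ - 1).toNat, ?_, ?_⟩
    · rw [div_lt_iff₀ (two_pow_pos' n), hcast]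
      have := Int.ceil_lt_add_one (l * 2 ^ n)
      linarith
    · rw [le_div_iff₀ (two_pow_pos' n), hcast]
      have := Int.le_ceil (l * 2 ^ n)
      linarith

lemma disjIoc (n : ℕ) :
    Pairwise (Function.onFun Disjoint fun i : ℕ => Ioc ((i:ℝ)/2^n) (((i:ℝ)+1)/2^n)) := by
  have key : ∀ i j : ℕ, i < j →
      Disjoint (Ioc ((i:ℝ)/2^n) (((i:ℝ)+1)/2^n)) (Ioc ((j:ℝ)/2^n) (((j:ℝ)+1)/2^n)) := by
    intro i j hij
    rw [Set.Ioc_disjoint_Ioc]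
    refine le_trans (min_le_left _ _) (le_trans ?_ (le_max_right _ _))
    have h : ((i:ℝ) + 1) ≤ (j:ℝ) := by exact_mod_cast hij
    gcongr
  intro i j hij
  rcases hij.lt_or_gt with h | h
  · exact key i j h
  · exact (key j i h).symm

/-- Lebesgue integral over a monotone union of sets is the supremum. -/
lemma lintegral_iUnion_mono {α : Type*} [MeasurableSpace α] (μ : Measure α) {S : ℕ → Set α}
    (hmono : Monotone S) (hm : ∀ n, MeasurableSet (S n)) {h : α → ℝ≥0∞} (hh : Measurable h) :
    ∫⁻ a in ⋃ n, S n, h a ∂μ = ⨆ n, ∫⁻ a in S n, h a ∂μ := by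
  rw [← lintegral_indicator (MeasurableSet.iUnion hm)]
  have hpt : ∀ a, (⋃ n, S n).indicator h a = ⨆ n, (S n).indicator h a := by
    intro a
    by_cases ha : a ∈ ⋃ n, S n
    · obtain ⟨n, hn⟩ := mem_iUnion.1 ha
      rw [indicator_of_mem ha]
      refine le_antisymm (le_iSup_of_le n (by rw [indicator_of_mem hn])) ?_
      refine iSup_le fun m => ?_
      by_cases hm' : a ∈ S m
      · rw [indicator_of_mem hm']
      · rw [indicator_of_notMem hm']; exact zero_le
    · have hnone : ∀ n, (S n).indicator h a = 0 := fun n =>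
        indicator_of_notMem (fun hn => ha (mem_iUnion.2 ⟨n, hn⟩)) h
      rw [indicator_of_notMem ha]
      simp [hnone]
  simp_rw [hpt]
  rw [lintegral_iSup (fun n => hh.indicator (hm n))
    (fun i j hij => indicator_le_indicator_of_subset (hmono hij) (fun a => zero_le))]
  exact iSup_congr fun n => lintegral_indicator (hm n) h

/-- Dyadic Tonelli-type inequality, "A side": valid for an arbitrary measure `ν`. -/
lemma lemA {X : Type*} [MeasurableSpace X] (ν : Measure X) {g : X → ℝ} (hg : Measurable g)
    (hgpos : ∀ x, 0 < g x) {k : ℝ → ℝ≥0∞} (hk : Measurable k) :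
    ∫⁻ l in Ioi (0:ℝ), k l * ν {x | l < g x} ≤ ∫⁻ x, (∫⁻ l in Ioc 0 (g x), k l) ∂ν := by
  classical
  have hgm : ∀ t : ℝ, MeasurableSet {x | t ≤ g x} := fun t => hg measurableSet_Ici
  have hWanti : Antitone fun t : ℝ => ν {x | t ≤ g x} := fun s t hst =>
    measure_mono fun x (hx : t ≤ g x) => le_trans hst hx
  have hWm : Measurable fun t : ℝ => ν {x | t ≤ g x} := hWanti.measurable
  -- Step 1 : discretized inequality
  have step1 : ∀ n : ℕ, ∫⁻ l in Ioi (0:ℝ), k l * ν {x | dC n l ≤ g x}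
      ≤ ∫⁻ x, (∫⁻ l in Ioc 0 (g x), k l) ∂ν := by
    intro n
    rw [← iUnion_Ioc_grid n, lintegral_iUnion (fun i => measurableSet_Ioc) (disjIoc n)]
    have hpiece : ∀ i : ℕ, ∫⁻ l in Ioc ((i:ℝ)/2^n) (((i:ℝ)+1)/2^n), k l * ν {x | dC n l ≤ g x}
        = ∫⁻ x, ({x' | ((i:ℝ)+1)/2^n ≤ g x'}).indicator
            (fun _ => ∫⁻ l in Ioc ((i:ℝ)/2^n) (((i:ℝ)+1)/2^n), k l) x ∂ν := by
      intro i
      rw [lintegral_indicator_const (hgm _), ← lintegral_mul_const _ hk]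
      refine (setLIntegral_congr_fun measurableSet_Ioc (fun l hl => ?_)).symm
      rw [dC_eq_on n i hl]
    calc ∑' i : ℕ, ∫⁻ l in Ioc ((i:ℝ)/2^n) (((i:ℝ)+1)/2^n), k l * ν {x | dC n l ≤ g x}
        = ∑' i : ℕ, ∫⁻ x, ({x' | ((i:ℝ)+1)/2^n ≤ g x'}).indicator
            (fun _ => ∫⁻ l in Ioc ((i:ℝ)/2^n) (((i:ℝ)+1)/2^n), k l) x ∂ν := tsum_congr hpiece
      _ = ∫⁻ x, ∑' i : ℕ, ({x' | ((i:ℝ)+1)/2^n ≤ g x'}).indicator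
            (fun _ => ∫⁻ l in Ioc ((i:ℝ)/2^n) (((i:ℝ)+1)/2^n), k l) x ∂ν :=
          (lintegral_tsum fun i => (measurable_const.indicator (hgm _)).aemeasurable).symm
      _ ≤ ∫⁻ x, (∫⁻ l in Ioc 0 (g x), k l) ∂ν := by
          refine lintegral_mono fun x => ?_
          have hU : ∀ i : ℕ, ({x' | ((i:ℝ)+1)/2^n ≤ g x'}).indicator
              (fun _ => ∫⁻ l in Ioc ((i:ℝ)/2^n) (((i:ℝ)+1)/2^n), k l) x
              = ∫⁻ l in (if ((i:ℝ)+1)/2^n ≤ g x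
                  then Ioc ((i:ℝ)/2^n) (((i:ℝ)+1)/2^n) else (∅ : Set ℝ)), k l := by
            intro i
            by_cases hx : ((i:ℝ)+1)/2^n ≤ g x
            · rw [if_pos hx,
                indicator_of_mem (show x ∈ {x' | ((i:ℝ)+1)/2^n ≤ g x'} from hx)]
            · rw [if_neg hx,
                indicator_of_notMem (show x ∉ {x' | ((i:ℝ)+1)/2^n ≤ g x'} from hx)]
              simp
          rw [tsum_congr hU, ← lintegral_iUnion
            (fun i => by (try dsimp only); split_ifs <;> simp [measurableSet_Ioc])
            (fun i j hij => by
              refine Disjoint.mono ?_ ?_ (disjIoc n hij) <;> (try dsimp only) <;>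
                split_ifs <;> simp)]
          refine lintegral_mono_set fun l hl => ?_
          obtain ⟨i, hi⟩ := mem_iUnion.1 hl
          by_cases hx : ((i:ℝ)+1)/2^n ≤ g x
          · rw [if_pos hx] at hi
            have h0 : (0:ℝ) ≤ (i:ℝ)/2^n := by positivity
            exact ⟨lt_of_le_of_lt h0 hi.1, le_trans hi.2 hx⟩
          · rw [if_neg hx] at hi
            exact absurd hi (notMem_empty l)
  -- Step 2 : pass to the supremum
  calc ∫⁻ l in Ioi (0:ℝ), k l * ν {x | l < g x}
      ≤ ∫⁻ l in Ioi (0:ℝ), ⨆ n, k l * ν {x | dC n l ≤ g x} := by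
        refine setLIntegral_mono' measurableSet_Ioi fun l _ => ?_
        have hsub : {x | l < g x} ⊆ ⋃ n, {x | dC n l ≤ g x} := by
          intro x hx
          have hx' : l < g x := hx
          obtain ⟨n, hn⟩ : ∃ n : ℕ, (g x - l)⁻¹ < 2 ^ n :=
            pow_unbounded_of_one_lt _ one_lt_two
          have hpos : 0 < g x - l := by linarith
          have hinv : ((2:ℝ) ^ n)⁻¹ < g x - l := by
            rw [inv_lt_comm₀ (two_pow_pos' n) hpos]
            exact hn
          refine mem_iUnion.2 ⟨n, ?_⟩
          have := dC_lt n l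
          show dC n l ≤ g x
          linarith
        have hdir : Monotone fun n : ℕ => {x | dC n l ≤ g x} := fun m n hmn x hx =>
          le_trans (dC_anti l hmn) hx
        calc k l * ν {x | l < g x} ≤ k l * ν (⋃ n, {x | dC n l ≤ g x}) :=
              mul_le_mul_right (measure_mono hsub) _
          _ = k l * ⨆ n, ν {x | dC n l ≤ g x} := by
              rw [hdir.directed_le.measure_iUnion]
          _ = ⨆ n, k l * ν {x | dC n l ≤ g x} := by rw [ENNReal.mul_iSup]
    _ = ⨆ n, ∫⁻ l in Ioi (0:ℝ), k l * ν {x | dC n l ≤ g x} := by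
        refine lintegral_iSup (fun n => hk.mul (hWm.comp (dC_meas n))) (fun m n hmn l => ?_)
        exact mul_le_mul_right (measure_mono fun x hx => le_trans (dC_anti l hmn) hx) _
    _ ≤ ∫⁻ x, (∫⁻ l in Ioc 0 (g x), k l) ∂ν := iSup_le step1

/-- Dyadic Tonelli-type inequality, "B side": valid for an arbitrary measure `ν`. -/
lemma lemB {X : Type*} [MeasurableSpace X] (ν : Measure X) {g : X → ℝ} (hg : Measurable g)
    (hgpos : ∀ x, 0 < g x) {h : ℝ → ℝ≥0∞} (hh : Measurable h) :
    ∫⁻ x, (∫⁻ l in Ioi (g x), h l) ∂ν ≤ ∫⁻ l in Ioi (0:ℝ), h l * ν {x | g x ≤ l} := by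
  classical
  have hgm : ∀ t : ℝ, MeasurableSet {x | g x ≤ t} := fun t => hg measurableSet_Iic
  have hWmono : Monotone fun t : ℝ => ν {x | g x ≤ t} := fun s t hst =>
    measure_mono fun x (hx : g x ≤ s) => le_trans hx hst
  have hWm : Measurable fun t : ℝ => ν {x | g x ≤ t} := hWmono.measurable
  -- pointwise supremum representation
  have hHsup : ∀ x, ∫⁻ l in Ioi (g x), h l = ⨆ n, ∫⁻ l in Ioi (dC n (g x)), h l := by
    intro x
    have hun : ⋃ n, Ioi (dC n (g x)) = Ioi (g x) := by
      ext l
      simp only [mem_iUnion, mem_Ioi]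
      constructor
      · rintro ⟨n, hn⟩
        exact lt_of_le_of_lt (le_dC n (g x)) hn
      · intro hl
        obtain ⟨n, hn⟩ : ∃ n : ℕ, (l - g x)⁻¹ < 2 ^ n :=
          pow_unbounded_of_one_lt _ one_lt_two
        have hpos : 0 < l - g x := by linarith
        have hinv : ((2:ℝ) ^ n)⁻¹ < l - g x := by
          rw [inv_lt_comm₀ (two_pow_pos' n) hpos]
          exact hn
        have := dC_lt n (g x)
        exact ⟨n, by linarith⟩
    rw [← hun, lintegral_iUnion_mono _ (fun m n hmn => Ioi_subset_Ioi (dC_anti (g x) hmn))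
      (fun n => measurableSet_Ioi) hh]
  have hHm : Measurable fun t : ℝ => ∫⁻ l in Ioi t, h l :=
    Antitone.measurable fun s t hst => lintegral_mono_set (Ioi_subset_Ioi hst)
  have hstep := lintegral_iSup (μ := ν) (f := fun n x => ∫⁻ l in Ioi (dC n (g x)), h l)
    (fun n => hHm.comp ((dC_meas n).comp hg))
    (fun m n hmn x => lintegral_mono_set (Ioi_subset_Ioi (dC_anti (g x) hmn)))
  rw [lintegral_congr hHsup, hstep]
  refine iSup_le fun n => ?_
  -- decompose `Ioi (dC n (g x))` into dyadic blocks
  have hdecomp : ∀ x, ∫⁻ l in Ioi (dC n (g x)), h l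
      = ∑' i : ℕ, ({x' | g x' ≤ (i:ℝ)/2^n}).indicator
          (fun _ => ∫⁻ l in Ioc ((i:ℝ)/2^n) (((i:ℝ)+1)/2^n), h l) x := by
    intro x
    have hset : Ioi (dC n (g x)) = ⋃ i : ℕ,
        (if g x ≤ (i:ℝ)/2^n then Ioc ((i:ℝ)/2^n) (((i:ℝ)+1)/2^n) else (∅ : Set ℝ)) := by
      ext l
      simp only [mem_iUnion, mem_Ioi]
      constructor
      · intro hl
        have hl0 : 0 < l := lt_of_le_of_lt (le_trans (hgpos x).le (le_dC n (g x))) hl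
        have : l ∈ ⋃ i : ℕ, Ioc ((i:ℝ)/2^n) (((i:ℝ)+1)/2^n) := by
          rw [iUnion_Ioc_grid n]; exact hl0
        obtain ⟨i, hi⟩ := mem_iUnion.1 this
        refine ⟨i, ?_⟩
        have hcond : g x ≤ (i:ℝ)/2^n := by
          -- from dC n (g x) < l ≤ (i+1)/2^n deduce ⌈g x * 2^n⌉ ≤ i
          have h1 : dC n (g x) < ((i:ℝ)+1)/2^n := lt_of_lt_of_le hl hi.2
          rw [dC, div_lt_div_iff₀ (two_pow_pos' n) (two_pow_pos' n)] at h1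
          have h2 : (⌈g x * 2 ^ n⌉ : ℝ) < (i:ℝ) + 1 := by nlinarith [two_pow_pos' n]
          have h3 : ⌈g x * 2 ^ n⌉ < (i : ℤ) + 1 := by exact_mod_cast h2
          have h4 : g x * 2 ^ n ≤ (i : ℝ) := by
            have := Int.ceil_le.1 (Int.lt_add_one_iff.1 h3)
            exact_mod_cast this
          rw [le_div_iff₀ (two_pow_pos' n)]
          exact h4
        rw [if_pos hcond]
        exact hi
      · rintro ⟨i, hi⟩
        by_cases hx : g x ≤ (i:ℝ)/2^n
        · rw [if_pos hx] at hi
          exact lt_of_le_of_lt (dC_le_grid hx) hi.1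
        · rw [if_neg hx] at hi
          exact absurd hi (notMem_empty l)
    rw [hset, lintegral_iUnion
      (fun i => by (try dsimp only); split_ifs <;> simp [measurableSet_Ioc])
      (fun i j hij => by
        refine Disjoint.mono ?_ ?_ (disjIoc n hij) <;> (try dsimp only) <;>
          split_ifs <;> simp)]
    refine tsum_congr fun i => ?_
    by_cases hx : g x ≤ (i:ℝ)/2^n
    · rw [if_pos hx, indicator_of_mem (show x ∈ {x' | g x' ≤ (i:ℝ)/2^n} from hx)]
    · rw [if_neg hx, indicator_of_notMem (show x ∉ {x' | g x' ≤ (i:ℝ)/2^n} from hx)]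
      simp
  rw [lintegral_congr hdecomp,
    lintegral_tsum fun i => (measurable_const.indicator (hgm _)).aemeasurable]
  rw [← iUnion_Ioc_grid n, lintegral_iUnion (fun i => measurableSet_Ioc) (disjIoc n)]
  refine ENNReal.tsum_le_tsum fun i => ?_
  rw [lintegral_indicator_const (hgm _), ← lintegral_mul_const _ hh]
  refine setLIntegral_mono' measurableSet_Ioc fun l hl => ?_
  exact mul_le_mul_right (measure_mono fun x (hx : g x ≤ (i:ℝ)/2^n) =>
    le_trans hx hl.1.le) _

end Stmt8Aux

/-- Suppose `∫_{{g ≤ λ}} A dμ ≤ C λ ∫_{{g > λ}} B dμ` for all `λ > 0`,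
`f : (0,∞) → (0,∞)` is continuously differentiable, strictly decreasing with `f(λ) → 0`
as `λ → ∞`, and `Φ(t) = ∫_0^t λ(−f'(λ)) dλ` is finite for all `t > 0`. Then
`∫_X f(g) A dμ ≤ C ∫_X Φ(g) B dμ` in `[0,∞]`. -/
theorem stmt8 {X : Type*} [MeasurableSpace X] (μ : MeasureTheory.Measure X)
    (g : X → ℝ) (hg : Measurable g) (hgpos : ∀ x, 0 < g x)
    (A B : X → ℝ≥0∞) (hA : Measurable A) (hB : Measurable B)
    (C : ℝ) (hC : 0 < C)
    (f : ℝ → ℝ) (hfpos : ∀ t ∈ Set.Ioi (0 : ℝ), 0 < f t)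
    (hfC1 : ContDiffOn ℝ 1 f (Set.Ioi 0))
    (hfdec : StrictAntiOn f (Set.Ioi 0))
    (hflim : Filter.Tendsto f Filter.atTop (nhds 0))
    (hΦfin : ∀ t : ℝ, 0 < t →
      (∫⁻ l in Set.Ioc (0 : ℝ) t, ENNReal.ofReal (l * (-(deriv f l)))) < ⊤)
    (hhyp : ∀ l : ℝ, 0 < l →
      ∫⁻ x in {x : X | g x ≤ l}, A x ∂μ ≤
        ENNReal.ofReal (C * l) * ∫⁻ x in {x : X | l < g x}, B x ∂μ) :
    ∫⁻ x, ENNReal.ofReal (f (g x)) * A x ∂μ ≤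
      ENNReal.ofReal C *
        ∫⁻ x, (∫⁻ l in Set.Ioc (0 : ℝ) (g x), ENNReal.ofReal (l * (-(deriv f l)))) * B x ∂μ := by
  open Set Stmt8Aux in
  -- measurability of the derivative data
  have hdm : Measurable (deriv f) := measurable_deriv f
  have hh : Measurable fun l : ℝ => ENNReal.ofReal (-(deriv f l)) :=
    hdm.neg.ennreal_ofReal
  have hk : Measurable fun l : ℝ => ENNReal.ofReal (l * (-(deriv f l))) :=
    (measurable_id.mul hdm.neg).ennreal_ofReal
  -- basic calculus facts
  have hdiff : ∀ t ∈ Ioi (0:ℝ), DifferentiableAt ℝ f t := fun t ht =>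
    (hfC1.differentiableOn one_ne_zero).differentiableAt (isOpen_Ioi.mem_nhds ht)
  have hcontd : ContinuousOn (deriv f) (Ioi 0) :=
    hfC1.continuousOn_deriv_of_isOpen isOpen_Ioi le_rfl
  have hdnp : ∀ t ∈ Ioi (0:ℝ), deriv f t ≤ 0 := by
    intro t ht
    have hslope : Tendsto (slope f t) (𝓝[>] t) (𝓝 (deriv f t)) := by
      have := hasDerivAt_iff_tendsto_slope.1 (hdiff t ht).hasDerivAt
      exact this.mono_left (nhdsWithin_mono t fun u hu => ne_of_gt hu)
    refine le_of_tendsto hslope ?_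
    filter_upwards [self_mem_nhdsWithin] with u hu
    have hu' : u ∈ Ioi (0:ℝ) := show (0:ℝ) < u from lt_trans ht hu
    have hfu : f u < f t := hfdec ht hu' hu
    rw [slope_def_field]
    have h1 : f u - f t ≤ 0 := by linarith
    have h2 : 0 ≤ u - t := by
      have : t < u := hu
      linarith
    exact div_nonpos_of_nonpos_of_nonneg h1 h2
  -- FTC on compact subintervals
  have hFTC : ∀ t T : ℝ, 0 < t → t ≤ T →
      ∫⁻ l in Ioc t T, ENNReal.ofReal (-(deriv f l)) = ENNReal.ofReal (f t - f T) := by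
    intro t T ht hT
    have hsub : uIcc t T ⊆ Ioi 0 := by
      rw [uIcc_of_le hT]
      intro u hu
      exact lt_of_lt_of_le ht hu.1
    have hci : ContinuousOn (deriv f) (uIcc t T) := hcontd.mono hsub
    have hii : IntervalIntegrable (deriv f) volume t T := hci.intervalIntegrable
    have heq : ∫ l in t..T, deriv f l = f T - f t :=
      intervalIntegral.integral_deriv_eq_sub (fun x hx => hdiff x (hsub hx)) hii
    have hIoc : IntegrableOn (fun l => -(deriv f l)) (Ioc t T) volume :=
      ((intervalIntegrable_iff_integrableOn_Ioc_of_le hT).1 hii).neg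
    have hnn : 0 ≤ᵐ[volume.restrict (Ioc t T)] fun l => -(deriv f l) :=
      (ae_restrict_iff' measurableSet_Ioc).2 (ae_of_all _ fun l hl =>
        neg_nonneg.2 (hdnp l (lt_trans ht hl.1)))
    rw [← MeasureTheory.ofReal_integral_eq_lintegral_ofReal hIoc hnn]
    congr 1
    have hIocInt : ∫ l in Ioc t T, deriv f l = f T - f t := by
      rw [← intervalIntegral.integral_of_le hT]
      exact heq
    rw [integral_neg, hIocInt]
    ring
  -- f t as a tail integral of -(deriv f)
  have hA1 : ∀ t : ℝ, 0 < t →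
      ∫⁻ l in Ioi t, ENNReal.ofReal (-(deriv f l)) = ENNReal.ofReal (f t) := by
    intro t ht
    have hU : Ioi t = ⋃ n : ℕ, Ioc t (t + n) := by
      ext l
      simp only [mem_Ioi, mem_iUnion, mem_Ioc]
      constructor
      · intro hl
        obtain ⟨n, hn⟩ := exists_nat_ge (l - t)
        exact ⟨n, hl, by linarith⟩
      · rintro ⟨n, h1, _⟩
        exact h1
    have hmonoS : Monotone fun n : ℕ => Ioc t (t + (n:ℝ)) := fun m n hmn =>
      Ioc_subset_Ioc_right (by
        have : (m:ℝ) ≤ n := Nat.cast_le.2 hmn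
        linarith)
    rw [hU, lintegral_iUnion_mono _ hmonoS (fun n => measurableSet_Ioc) hh]
    have hval : ∀ n : ℕ, ∫⁻ l in Ioc t (t + (n:ℝ)), ENNReal.ofReal (-(deriv f l))
        = ENNReal.ofReal (f t - f (t + n)) := fun n =>
      hFTC t (t + n) ht (le_add_of_nonneg_right n.cast_nonneg)
    rw [iSup_congr hval]
    have hmono : Monotone fun n : ℕ => ENNReal.ofReal (f t - f (t + (n:ℝ))) := by
      intro m n hmn
      apply ENNReal.ofReal_le_ofReal
      have hmem : ∀ j : ℕ, t + (j:ℝ) ∈ Ioi (0:ℝ) := fun j => by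
        have : (0:ℝ) ≤ j := j.cast_nonneg
        simp only [mem_Ioi]
        linarith
      have : f (t + (n:ℝ)) ≤ f (t + (m:ℝ)) :=
        hfdec.antitoneOn (hmem m) (hmem n) (by
          have : (m:ℝ) ≤ n := Nat.cast_le.2 hmn
          linarith)
      linarith
    have hlim : Tendsto (fun n : ℕ => ENNReal.ofReal (f t - f (t + (n:ℝ)))) atTop
        (𝓝 (ENNReal.ofReal (f t))) := by
      have h0 : Tendsto (fun n : ℕ => f (t + (n:ℝ))) atTop (𝓝 0) :=
        hflim.comp (tendsto_atTop_add_const_left atTop t tendsto_natCast_atTop_atTop)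
      have hsubl : Tendsto (fun n : ℕ => f t - f (t + (n:ℝ))) atTop (𝓝 (f t)) := by
        simpa using tendsto_const_nhds.sub h0
      exact (ENNReal.continuous_ofReal.tendsto _).comp hsubl
    exact tendsto_nhds_unique (tendsto_atTop_iSup hmono) hlim
  -- measurability of the two monotone auxiliary functions
  have hH : Measurable fun t : ℝ => ∫⁻ l in Ioi t, ENNReal.ofReal (-(deriv f l)) :=
    Antitone.measurable fun s t hst => lintegral_mono_set (Ioi_subset_Ioi hst)
  have hPhi : Measurable fun t : ℝ => ∫⁻ l in Ioc (0:ℝ) t, ENNReal.ofReal (l * (-(deriv f l))) :=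
    Monotone.measurable fun s t hst => lintegral_mono_set (Ioc_subset_Ioc_right hst)
  have hmleB : Measurable fun l : ℝ => (μ.withDensity B) {x | l < g x} :=
    Antitone.measurable fun s t hst =>
      measure_mono fun x (hx : t < g x) => lt_of_le_of_lt hst hx
  -- main chain of (in)equalities
  calc ∫⁻ x, ENNReal.ofReal (f (g x)) * A x ∂μ
      = ∫⁻ x, (∫⁻ l in Ioi (g x), ENNReal.ofReal (-(deriv f l))) * A x ∂μ :=
        lintegral_congr fun x => by rw [hA1 (g x) (hgpos x)]
    _ = ∫⁻ x, (∫⁻ l in Ioi (g x), ENNReal.ofReal (-(deriv f l))) ∂(μ.withDensity A) := by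
        rw [lintegral_withDensity_eq_lintegral_mul μ hA
          (g := fun x => ∫⁻ l in Ioi (g x), ENNReal.ofReal (-(deriv f l))) (hH.comp hg)]
        exact lintegral_congr fun x => by simp [mul_comm]
    _ ≤ ∫⁻ l in Ioi (0:ℝ), ENNReal.ofReal (-(deriv f l)) * (μ.withDensity A) {x | g x ≤ l} :=
        lemB (μ.withDensity A) hg hgpos hh
    _ ≤ ∫⁻ l in Ioi (0:ℝ), ENNReal.ofReal C *
          (ENNReal.ofReal (l * (-(deriv f l))) * (μ.withDensity B) {x | l < g x}) := by
        refine setLIntegral_mono' measurableSet_Ioi fun l hl => ?_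
        have hl' : (0:ℝ) < l := hl
        have h1 : (μ.withDensity A) {x | g x ≤ l}
            ≤ ENNReal.ofReal (C * l) * (μ.withDensity B) {x | l < g x} := by
          rw [withDensity_apply _ (show MeasurableSet {x | g x ≤ l} from hg measurableSet_Iic),
            withDensity_apply _ (show MeasurableSet {x | l < g x} from hg measurableSet_Ioi)]
          exact hhyp l hl'
        calc ENNReal.ofReal (-(deriv f l)) * (μ.withDensity A) {x | g x ≤ l}
            ≤ ENNReal.ofReal (-(deriv f l)) *
              (ENNReal.ofReal (C * l) * (μ.withDensity B) {x | l < g x}) :=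
              mul_le_mul_right h1 _
          _ = ENNReal.ofReal C *
              (ENNReal.ofReal (l * (-(deriv f l))) * (μ.withDensity B) {x | l < g x}) := by
              rw [ENNReal.ofReal_mul hC.le, ENNReal.ofReal_mul hl'.le]
              ring
    _ = ENNReal.ofReal C * ∫⁻ l in Ioi (0:ℝ),
          ENNReal.ofReal (l * (-(deriv f l))) * (μ.withDensity B) {x | l < g x} :=
        lintegral_const_mul _ (hk.mul hmleB)
    _ ≤ ENNReal.ofReal C * ∫⁻ x, (∫⁻ l in Ioc (0:ℝ) (g x),
          ENNReal.ofReal (l * (-(deriv f l)))) ∂(μ.withDensity B) :=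
        mul_le_mul_right (lemA (μ.withDensity B) hg hgpos hk) _
    _ = ENNReal.ofReal C * ∫⁻ x, (∫⁻ l in Ioc (0:ℝ) (g x),
          ENNReal.ofReal (l * (-(deriv f l)))) * B x ∂μ := by
        rw [lintegral_withDensity_eq_lintegral_mul μ hB
          (g := fun x => ∫⁻ l in Ioc (0:ℝ) (g x), ENNReal.ofReal (l * (-(deriv f l))))
          (hPhi.comp hg)]
        exact congrArg _ (lintegral_congr fun x => by simp [mul_comm])
end

section
/- Let (X, Σ, m) be a measure space with m(X) < ∞ and let ρ : X → (0,∞) be measurable with m-essential supremum equal to ∞. Fix t ∈ (0,1) and define ρ_t : X → (0,∞) by ρ_t(x) := ρ(x)/t if ρ(x) ≤ 1 and ρ_t(x) := t·ρ(x) if ρ(x) > 1. Then there exists N ∈ ℕ such that for all n ≥ N, ∫_X ρ_tⁿ dm ≤ 2 tⁿ ∫_X ρⁿ dm, as an inequality in [0,∞]. -/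
open MeasureTheory Filter Topology
open scoped ENNReal NNReal

/-- Let `m(X) < ∞`, `ρ : X → (0,∞)` measurable with essential supremum `∞`,
and `t ∈ (0,1)`. With `ρ_t := ρ/t` on `{ρ ≤ 1}` and `ρ_t := t·ρ` on `{ρ > 1}`, there is
`N ∈ ℕ` such that `∫ ρ_t^n dm ≤ 2 t^n ∫ ρ^n dm` for all `n ≥ N`. -/
theorem stmt11 {X : Type*} [MeasurableSpace X] (m : MeasureTheory.Measure X)
    (hXfin : m Set.univ < ⊤)
    (ρ : X → ℝ) (hmeas : Measurable ρ) (hpos : ∀ x, 0 < ρ x)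
    (hess : essSup (fun x => ENNReal.ofReal (ρ x)) m = ⊤)
    (t : ℝ) (ht0 : 0 < t) (ht1 : t < 1) :
    ∃ N : ℕ, ∀ n : ℕ, N ≤ n →
      ∫⁻ x, ENNReal.ofReal ((if ρ x ≤ 1 then ρ x / t else t * ρ x) ^ n) ∂m ≤
        2 * ENNReal.ofReal (t ^ n) * ∫⁻ x, ENNReal.ofReal (ρ x ^ n) ∂m := by
  set c : ℝ := 2 / t ^ 2 with hc
  have ht2 : (0:ℝ) < t ^ 2 := by positivity
  have hc1 : 1 < c := by
    rw [hc, lt_div_iff₀ ht2]; nlinarith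
  have hcpos : (0:ℝ) < c := lt_trans one_pos hc1
  set S := {x | c ≤ ρ x} with hS
  have hSmeas : MeasurableSet S := measurableSet_le measurable_const hmeas
  have hSpos : 0 < m S := by
    by_contra h
    push_neg at h
    have hS0 : m S = 0 := le_antisymm h (zero_le)
    have hae : (fun x => ENNReal.ofReal (ρ x)) ≤ᵐ[m] fun _ => ENNReal.ofReal c := by
      filter_upwards [measure_eq_zero_iff_ae_notMem.mp hS0] with x hx
      exact ENNReal.ofReal_le_ofReal (le_of_not_ge hx)
    have hle := essSup_le_of_ae_le _ hae
    rw [hess] at hle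
    exact ENNReal.ofReal_ne_top (top_le_iff.mp hle)
  have hSfin : m S ≠ ⊤ := (lt_of_le_of_lt (measure_mono (Set.subset_univ _)) hXfin).ne
  obtain ⟨N, hN⟩ := pow_unbounded_of_one_lt ((m Set.univ / m S).toReal) (by norm_num : (1:ℝ) < 2)
  have hkey : ∀ n : ℕ, N ≤ n → m Set.univ ≤ 2 ^ n * m S := by
    intro n hn
    have h1 : m Set.univ / m S ≤ 2 ^ n := by
      calc m Set.univ / m S = ENNReal.ofReal ((m Set.univ / m S).toReal) := by
            rw [ENNReal.ofReal_toReal (ENNReal.div_lt_top hXfin.ne hSpos.ne').ne]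
        _ ≤ ENNReal.ofReal (2 ^ n) :=
            ENNReal.ofReal_le_ofReal (le_trans hN.le (pow_le_pow_right₀ one_le_two hn))
        _ = 2 ^ n := by
            rw [ENNReal.ofReal_pow (by norm_num)]
            norm_num
    calc m Set.univ = m Set.univ / m S * m S := (ENNReal.div_mul_cancel hSpos.ne' hSfin).symm
      _ ≤ 2 ^ n * m S := mul_le_mul_left h1 _
  have hlow : ∀ n : ℕ, ENNReal.ofReal (c ^ n) * m S ≤ ∫⁻ x, ENNReal.ofReal (ρ x ^ n) ∂m := by
    intro n
    calc ENNReal.ofReal (c ^ n) * m S = ∫⁻ _ in S, ENNReal.ofReal (c ^ n) ∂m := by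
          rw [setLIntegral_const]
      _ ≤ ∫⁻ x in S, ENNReal.ofReal (ρ x ^ n) ∂m := by
          refine setLIntegral_mono' hSmeas fun x hx => ?_
          exact ENNReal.ofReal_le_ofReal (pow_le_pow_left₀ hcpos.le hx n)
      _ ≤ ∫⁻ x, ENNReal.ofReal (ρ x ^ n) ∂m := setLIntegral_le_lintegral _ _
  refine ⟨N, fun n hn => ?_⟩
  set A := {x | ρ x ≤ 1} with hA
  have hAmeas : MeasurableSet A := measurableSet_le hmeas measurable_const
  set f : X → ℝ≥0∞ := fun x => ENNReal.ofReal ((if ρ x ≤ 1 then ρ x / t else t * ρ x) ^ n) with hf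
  have hApart : ∫⁻ x in A, f x ∂m ≤ ENNReal.ofReal (t ^ n) * ∫⁻ x, ENNReal.ofReal (ρ x ^ n) ∂m := by
    calc ∫⁻ x in A, f x ∂m ≤ ∫⁻ _ in A, ENNReal.ofReal ((1 / t) ^ n) ∂m := by
          refine setLIntegral_mono' hAmeas fun x hx => ?_
          simp only [hA, Set.mem_setOf_eq] at hx
          simp only [hf, if_pos hx]
          refine ENNReal.ofReal_le_ofReal (pow_le_pow_left₀ (div_nonneg (hpos x).le ht0.le) ?_ n)
          gcongr
      _ = ENNReal.ofReal ((1 / t) ^ n) * m A := setLIntegral_const _ _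
      _ ≤ ENNReal.ofReal ((1 / t) ^ n) * m Set.univ :=
          mul_le_mul_right (measure_mono (Set.subset_univ _)) _
      _ ≤ ENNReal.ofReal ((1 / t) ^ n) * (2 ^ n * m S) := mul_le_mul_right (hkey n hn) _
      _ = ENNReal.ofReal (t ^ n) * (ENNReal.ofReal (c ^ n) * m S) := by
          rw [← mul_assoc, ← mul_assoc]
          congr 1
          rw [show ((2:ℝ≥0∞) ^ n) = ENNReal.ofReal (2 ^ n) by
                rw [ENNReal.ofReal_pow (by norm_num)]; norm_num,
            ← ENNReal.ofReal_mul (by positivity), ← ENNReal.ofReal_mul (by positivity)]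
          congr 1
          rw [hc]
          rw [← mul_pow, ← mul_pow]
          congr 1
          field_simp [ht0.ne'] <;> ring
      _ ≤ ENNReal.ofReal (t ^ n) * ∫⁻ x, ENNReal.ofReal (ρ x ^ n) ∂m :=
          mul_le_mul_right (hlow n) _
  have hBpart : ∫⁻ x in Aᶜ, f x ∂m ≤ ENNReal.ofReal (t ^ n) * ∫⁻ x, ENNReal.ofReal (ρ x ^ n) ∂m := by
    calc ∫⁻ x in Aᶜ, f x ∂m
        = ∫⁻ x in Aᶜ, ENNReal.ofReal (t ^ n) * ENNReal.ofReal (ρ x ^ n) ∂m := by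
          refine setLIntegral_congr_fun hAmeas.compl (fun x hx => ?_)
          simp only [hA, Set.mem_compl_iff, Set.mem_setOf_eq] at hx
          simp only [hf, if_neg hx]
          rw [mul_pow, ENNReal.ofReal_mul (by positivity)]
      _ = ENNReal.ofReal (t ^ n) * ∫⁻ x in Aᶜ, ENNReal.ofReal (ρ x ^ n) ∂m :=
          lintegral_const_mul' _ _ ENNReal.ofReal_ne_top
      _ ≤ ENNReal.ofReal (t ^ n) * ∫⁻ x, ENNReal.ofReal (ρ x ^ n) ∂m :=
          mul_le_mul_right (setLIntegral_le_lintegral _ _) _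
  calc ∫⁻ x, f x ∂m = ∫⁻ x in A, f x ∂m + ∫⁻ x in Aᶜ, f x ∂m :=
        (lintegral_add_compl f hAmeas).symm
    _ ≤ ENNReal.ofReal (t ^ n) * ∫⁻ x, ENNReal.ofReal (ρ x ^ n) ∂m +
        ENNReal.ofReal (t ^ n) * ∫⁻ x, ENNReal.ofReal (ρ x ^ n) ∂m := add_le_add hApart hBpart
    _ = 2 * ENNReal.ofReal (t ^ n) * ∫⁻ x, ENNReal.ofReal (ρ x ^ n) ∂m := by ring
end

section
/- Let p > 1, let (X, Σ, m) be a measure space with m(X) < ∞, and let ρ : X → (0,∞) be measurable with esssup_m ρ = ∞ and esssup_m (1/ρ) = ∞. For t ∈ (0,1) define ρ_t : X → (0,∞) by ρ_t := ρ/t on {ρ ≤ 1} and ρ_t := t·ρ on {ρ > 1}. Then L_{ρ_t} ≤ t² · L_ρ, where for a measurable η : X → (0,∞) one sets L_η := liminf_{n→∞} n^{−p} ( ∫_X ηⁿ dm )^{1/n} ( ∫_X η^{−n} dm )^{1/n} ∈ [0,∞]. -/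
open MeasureTheory Filter Topology
open scoped ENNReal NNReal

/-- The Zhikov quantity `L_η = liminf_{n→∞} n^{−p} (∫ η^n dm)^{1/n} (∫ η^{−n} dm)^{1/n}`,
as an element of `[0,∞]`. -/
noncomputable def Lconst {X : Type*} [MeasurableSpace X] (p : ℝ)
    (m : MeasureTheory.Measure X) (η : X → ℝ) : ℝ≥0∞ :=
  Filter.liminf
    (fun n : ℕ =>
      ENNReal.ofReal ((n : ℝ) ^ (-p)) *
        (∫⁻ x, ENNReal.ofReal (η x ^ (n : ℝ)) ∂m) ^ ((n : ℝ)⁻¹) *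
        (∫⁻ x, ENNReal.ofReal (η x ^ (-(n : ℝ))) ∂m) ^ ((n : ℝ)⁻¹))
    Filter.atTop

private lemma aux_ev {X : Type*} [MeasurableSpace X] (m : MeasureTheory.Measure X)
    (hXfin : m Set.univ < ⊤) (g : X → ℝ≥0∞) (hg : Measurable g)
    (hgtop : essSup g m = ⊤) (c : ℝ≥0∞) (hc0 : c ≠ 0) (hctop : c ≠ ⊤) :
    ∀ᶠ n : ℕ in atTop, m Set.univ ≤ c ^ n * ∫⁻ x, (g x) ^ n ∂m := by
  set a : ℝ≥0∞ := 2 / c with ha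
  have hatop : a ≠ ⊤ := (ENNReal.div_lt_top (by norm_num) hc0).ne
  have hca : c * a = 2 := ENNReal.mul_div_cancel hc0 hctop
  have hS : 0 < m {x | a < g x} := by
    by_contra h
    push_neg at h
    have h0 : m {x | a < g x} = 0 := le_antisymm h zero_le
    have hae : ∀ᵐ x ∂m, g x ≤ a := by
      rw [ae_iff]; simpa [not_le] using h0
    have := essSup_le_of_ae_le a hae
    rw [hgtop] at this
    exact hatop (top_le_iff.mp this)
  have key : ∀ n : ℕ, a ^ n * m {x | a < g x} ≤ ∫⁻ x, g x ^ n ∂m := by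
    intro n
    have h1 : a ^ n * m {x | a < g x} = ∫⁻ _ in {x | a < g x}, a ^ n ∂m := by
      rw [setLIntegral_const]
    rw [h1]
    refine le_trans (setLIntegral_mono (hg.pow_const n) ?_) (setLIntegral_le_lintegral _ _)
    intro x hx
    exact pow_le_pow_left₀ (bot_le) (le_of_lt hx) n
  have h2 : Tendsto (fun n : ℕ => (2 : ℝ≥0∞) ^ n * m {x | a < g x}) atTop (𝓝 ⊤) := by
    have hpow : Tendsto (fun n : ℕ => (2 : ℝ≥0∞) ^ n) atTop (𝓝 ⊤) :=
      ENNReal.tendsto_pow_atTop_nhds_top_iff.mpr ENNReal.one_lt_two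
    have := ENNReal.Tendsto.mul_const hpow (b := m {x | a < g x})
      (Or.inl (by simp : (⊤ : ℝ≥0∞) ≠ 0))
    rwa [ENNReal.top_mul hS.ne'] at this
  filter_upwards [h2.eventually (eventually_ge_nhds hXfin)] with n hn
  calc m Set.univ ≤ 2 ^ n * m {x | a < g x} := hn
    _ = (c * a) ^ n * m {x | a < g x} := by rw [hca]
    _ = c ^ n * (a ^ n * m {x | a < g x}) := by rw [mul_pow, mul_assoc]
    _ ≤ c ^ n * ∫⁻ x, g x ^ n ∂m := mul_le_mul_right (key n) _

/-- Let `p > 1`, `m(X) < ∞`, and `ρ : X → (0,∞)` with both `ρ` and `1/ρ`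
essentially unbounded. For `t ∈ (0,1)` let `ρ_t := ρ/t` on `{ρ ≤ 1}` and `ρ_t := t·ρ` on
`{ρ > 1}`. Then `L_{ρ_t} ≤ t² L_ρ`. -/
theorem stmt12 {X : Type*} [MeasurableSpace X] (m : MeasureTheory.Measure X) (p : ℝ)
    (hp : 1 < p) (hXfin : m Set.univ < ⊤)
    (ρ : X → ℝ) (hmeas : Measurable ρ) (hpos : ∀ x, 0 < ρ x)
    (hess : essSup (fun x => ENNReal.ofReal (ρ x)) m = ⊤)
    (hessinv : essSup (fun x => ENNReal.ofReal ((ρ x)⁻¹)) m = ⊤)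
    (t : ℝ) (ht0 : 0 < t) (ht1 : t < 1) :
    Lconst p m (fun x => if ρ x ≤ 1 then ρ x / t else t * ρ x) ≤
      ENNReal.ofReal (t ^ 2) * Lconst p m ρ := by
  set σ : X → ℝ := fun x => if ρ x ≤ 1 then ρ x / t else t * ρ x with hσ
  have hσpos : ∀ x, 0 < σ x := by
    intro x; simp only [hσ]; split
    · exact div_pos (hpos x) ht0
    · exact mul_pos ht0 (hpos x)
  set T : ℝ≥0∞ := ENNReal.ofReal t with hT
  have hT0 : T ≠ 0 := by simp [hT, ENNReal.ofReal_eq_zero, not_le, ht0]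
  have hTtop : T ≠ ⊤ := ENNReal.ofReal_ne_top
  -- abbreviations for integrals
  set I : ℕ → ℝ≥0∞ := fun n => ∫⁻ x, ENNReal.ofReal (ρ x ^ (n : ℝ)) ∂m with hI
  set J : ℕ → ℝ≥0∞ := fun n => ∫⁻ x, ENNReal.ofReal (ρ x ^ (-(n : ℝ))) ∂m with hJ
  set Iσ : ℕ → ℝ≥0∞ := fun n => ∫⁻ x, ENNReal.ofReal (σ x ^ (n : ℝ)) ∂m with hIσ
  set Jσ : ℕ → ℝ≥0∞ := fun n => ∫⁻ x, ENNReal.ofReal (σ x ^ (-(n : ℝ))) ∂m with hJσ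
  -- pointwise real bounds
  have hpt1 : ∀ (n : ℕ) x, σ x ^ (n : ℝ) ≤ t⁻¹ ^ (n : ℝ) + t ^ (n : ℝ) * ρ x ^ (n : ℝ) := by
    intro n x
    simp only [hσ]
    by_cases h : ρ x ≤ 1
    · rw [if_pos h]
      have h1 : (ρ x / t) ^ (n : ℝ) ≤ t⁻¹ ^ (n : ℝ) := by
        apply Real.rpow_le_rpow (div_pos (hpos x) ht0).le _ (by positivity)
        rw [div_le_iff₀ ht0, inv_mul_cancel₀ ht0.ne']
        exact h
      have h2 : 0 ≤ t ^ (n : ℝ) * ρ x ^ (n : ℝ) :=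
        mul_nonneg (Real.rpow_nonneg ht0.le _) (Real.rpow_nonneg (hpos x).le _)
      linarith
    · rw [if_neg h]
      rw [Real.mul_rpow ht0.le (hpos x).le]
      have : 0 ≤ t⁻¹ ^ (n : ℝ) := by positivity
      linarith
  have hpt2 : ∀ (n : ℕ) x, σ x ^ (-(n : ℝ)) ≤ t⁻¹ ^ (n : ℝ) + t ^ (n : ℝ) * ρ x ^ (-(n : ℝ)) := by
    intro n x
    simp only [hσ]
    by_cases h : ρ x ≤ 1
    · rw [if_pos h]
      have heq : (ρ x / t) ^ (-(n : ℝ)) = t ^ (n : ℝ) * ρ x ^ (-(n : ℝ)) := by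
        rw [Real.rpow_neg (div_pos (hpos x) ht0).le, Real.div_rpow (hpos x).le ht0.le,
          Real.rpow_neg (hpos x).le]
        field_simp
      rw [heq]
      have : 0 ≤ t⁻¹ ^ (n : ℝ) := by positivity
      linarith
    · rw [if_neg h]
      push_neg at h
      have h1 : (t * ρ x) ^ (-(n : ℝ)) ≤ t⁻¹ ^ (n : ℝ) := by
        rw [Real.rpow_neg (mul_pos ht0 (hpos x)).le,
          ← Real.inv_rpow (mul_pos ht0 (hpos x)).le, mul_inv]
        apply Real.rpow_le_rpow (by positivity) _ (by positivity)
        calc t⁻¹ * (ρ x)⁻¹ ≤ t⁻¹ * 1 := by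
              apply mul_le_mul_of_nonneg_left _ (by positivity)
              rw [inv_le_one_iff₀]; right; exact h.le
          _ = t⁻¹ := mul_one _
      have h2 : 0 ≤ t ^ (n : ℝ) * ρ x ^ (-(n : ℝ)) :=
        mul_nonneg (Real.rpow_nonneg ht0.le _) (Real.rpow_nonneg (hpos x).le _)
      linarith
  -- integral bounds
  have hint : ∀ (n : ℕ) (f fρ : X → ℝ)
      (hmf : Measurable fun x => ENNReal.ofReal (fρ x))
      (hb : ∀ x, f x ≤ t⁻¹ ^ (n : ℝ) + t ^ (n : ℝ) * fρ x),
      (∫⁻ x, ENNReal.ofReal (f x) ∂m) ≤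
        ENNReal.ofReal (t⁻¹ ^ (n : ℝ)) * m Set.univ +
          ENNReal.ofReal (t ^ (n : ℝ)) * ∫⁻ x, ENNReal.ofReal (fρ x) ∂m := by
    intro n f fρ hmf hb
    have hmono : (∫⁻ x, ENNReal.ofReal (f x) ∂m) ≤
        ∫⁻ x, ENNReal.ofReal (t⁻¹ ^ (n : ℝ)) +
          ENNReal.ofReal (t ^ (n : ℝ)) * ENNReal.ofReal (fρ x) ∂m := by
      apply lintegral_mono
      intro x
      calc ENNReal.ofReal (f x) ≤ ENNReal.ofReal (t⁻¹ ^ (n : ℝ) + t ^ (n : ℝ) * fρ x) :=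
            ENNReal.ofReal_le_ofReal (hb x)
        _ ≤ ENNReal.ofReal (t⁻¹ ^ (n : ℝ)) + ENNReal.ofReal (t ^ (n : ℝ) * fρ x) :=
            ENNReal.ofReal_add_le
        _ ≤ _ := by
            rw [ENNReal.ofReal_mul (by positivity)]
    refine hmono.trans (le_of_eq ?_)
    rw [lintegral_add_left measurable_const, lintegral_const,
      lintegral_const_mul _ hmf]
  have hImeas : ∀ n : ℕ, Measurable fun x => ENNReal.ofReal (ρ x ^ (n : ℝ)) :=
    fun n => (hmeas.pow_const (n : ℝ)).ennreal_ofReal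
  have hJmeas : ∀ n : ℕ, Measurable fun x => ENNReal.ofReal (ρ x ^ (-(n : ℝ))) :=
    fun n => (hmeas.pow_const (-(n : ℝ))).ennreal_ofReal
  have hIσb : ∀ n : ℕ, Iσ n ≤ ENNReal.ofReal (t⁻¹ ^ (n : ℝ)) * m Set.univ +
      ENNReal.ofReal (t ^ (n : ℝ)) * I n :=
    fun n => hint n _ _ (hImeas n) (hpt1 n)
  have hJσb : ∀ n : ℕ, Jσ n ≤ ENNReal.ofReal (t⁻¹ ^ (n : ℝ)) * m Set.univ +
      ENNReal.ofReal (t ^ (n : ℝ)) * J n :=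
    fun n => hint n _ _ (hJmeas n) (hpt2 n)
  -- rewriting the ofReal powers
  have hTn : ∀ n : ℕ, ENNReal.ofReal (t ^ (n : ℝ)) = T ^ n := by
    intro n
    rw [Real.rpow_natCast, ENNReal.ofReal_pow ht0.le]
  have hTin : ∀ n : ℕ, ENNReal.ofReal (t⁻¹ ^ (n : ℝ)) = (T⁻¹) ^ n := by
    intro n
    rw [Real.rpow_natCast, ENNReal.ofReal_pow (by positivity),
      ENNReal.ofReal_inv_of_pos ht0]
  -- the eventual domination of the constant term
  have hev1 : ∀ᶠ n : ℕ in atTop,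
      ENNReal.ofReal (t⁻¹ ^ (n : ℝ)) * m Set.univ ≤ ENNReal.ofReal (t ^ (n : ℝ)) * I n := by
    have hg : Measurable fun x => ENNReal.ofReal (ρ x) := hmeas.ennreal_ofReal
    have := aux_ev m hXfin _ hg hess (T ^ 2) (pow_ne_zero _ hT0)
      (ENNReal.pow_ne_top hTtop)
    filter_upwards [this] with n hn
    have hgn : (∫⁻ x, (ENNReal.ofReal (ρ x)) ^ n ∂m) = I n := by
      simp only [hI]
      congr 1
      funext x
      rw [← ENNReal.ofReal_pow (hpos x).le, Real.rpow_natCast]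
    rw [hgn] at hn
    rw [hTin, hTn]
    calc (T⁻¹) ^ n * m Set.univ ≤ (T⁻¹) ^ n * ((T ^ 2) ^ n * I n) := mul_le_mul_right hn _
      _ = (T⁻¹ * T ^ 2) ^ n * I n := by rw [mul_pow, mul_assoc]
      _ = T ^ n * I n := by
          congr 2
          rw [sq, ← mul_assoc, ENNReal.inv_mul_cancel hT0 hTtop, one_mul]
  have hev2 : ∀ᶠ n : ℕ in atTop,
      ENNReal.ofReal (t⁻¹ ^ (n : ℝ)) * m Set.univ ≤ ENNReal.ofReal (t ^ (n : ℝ)) * J n := by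
    have hg : Measurable fun x => ENNReal.ofReal ((ρ x)⁻¹) := hmeas.inv.ennreal_ofReal
    have := aux_ev m hXfin _ hg hessinv (T ^ 2) (pow_ne_zero _ hT0)
      (ENNReal.pow_ne_top hTtop)
    filter_upwards [this] with n hn
    have hgn : (∫⁻ x, (ENNReal.ofReal ((ρ x)⁻¹)) ^ n ∂m) = J n := by
      simp only [hJ]
      congr 1
      funext x
      rw [← ENNReal.ofReal_pow (inv_nonneg.mpr (hpos x).le), Real.rpow_neg (hpos x).le,
        Real.rpow_natCast, inv_pow]
    rw [hgn] at hn
    rw [hTin, hTn]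
    calc (T⁻¹) ^ n * m Set.univ ≤ (T⁻¹) ^ n * ((T ^ 2) ^ n * J n) := mul_le_mul_right hn _
      _ = (T⁻¹ * T ^ 2) ^ n * J n := by rw [mul_pow, mul_assoc]
      _ = T ^ n * J n := by
          congr 2
          rw [sq, ← mul_assoc, ENNReal.inv_mul_cancel hT0 hTtop, one_mul]
  -- the comparison sequence
  set u : ℕ → ℝ≥0∞ := fun n => (4 : ℝ≥0∞) ^ ((n : ℝ)⁻¹) * T ^ 2 with hu
  -- the main eventual bound between the liminf sequences
  have hFG : ∀ᶠ n : ℕ in atTop,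
      (ENNReal.ofReal ((n : ℝ) ^ (-p)) * Iσ n ^ ((n : ℝ)⁻¹) * Jσ n ^ ((n : ℝ)⁻¹)) ≤
        u n * (ENNReal.ofReal ((n : ℝ) ^ (-p)) * I n ^ ((n : ℝ)⁻¹) * J n ^ ((n : ℝ)⁻¹)) := by
    filter_upwards [hev1, hev2, eventually_ge_atTop 1] with n h1 h2 hn1
    have hnR : ((n : ℝ)) ≠ 0 := by positivity
    have hinv0 : (0 : ℝ) ≤ (n : ℝ)⁻¹ := by positivity
    have hIσ2 : Iσ n ≤ 2 * (ENNReal.ofReal (t ^ (n : ℝ)) * I n) := by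
      calc Iσ n ≤ _ := hIσb n
        _ ≤ ENNReal.ofReal (t ^ (n : ℝ)) * I n + ENNReal.ofReal (t ^ (n : ℝ)) * I n :=
            add_le_add_left h1 _
        _ = _ := (two_mul _).symm
    have hJσ2 : Jσ n ≤ 2 * (ENNReal.ofReal (t ^ (n : ℝ)) * J n) := by
      calc Jσ n ≤ _ := hJσb n
        _ ≤ ENNReal.ofReal (t ^ (n : ℝ)) * J n + ENNReal.ofReal (t ^ (n : ℝ)) * J n :=
            add_le_add_left h2 _
        _ = _ := (two_mul _).symm
    have hTr : (ENNReal.ofReal (t ^ (n : ℝ))) ^ ((n : ℝ)⁻¹) = T := by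
      rw [← ENNReal.ofReal_rpow_of_pos ht0, ← ENNReal.rpow_mul,
        mul_inv_cancel₀ hnR, ENNReal.rpow_one]
    have hIr : Iσ n ^ ((n : ℝ)⁻¹) ≤ (2 : ℝ≥0∞) ^ ((n : ℝ)⁻¹) * (T * I n ^ ((n : ℝ)⁻¹)) := by
      calc Iσ n ^ ((n : ℝ)⁻¹) ≤ (2 * (ENNReal.ofReal (t ^ (n : ℝ)) * I n)) ^ ((n : ℝ)⁻¹) :=
            ENNReal.rpow_le_rpow hIσ2 hinv0
        _ = _ := by
            rw [ENNReal.mul_rpow_of_nonneg _ _ hinv0, ENNReal.mul_rpow_of_nonneg _ _ hinv0,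
              hTr]
    have hJr : Jσ n ^ ((n : ℝ)⁻¹) ≤ (2 : ℝ≥0∞) ^ ((n : ℝ)⁻¹) * (T * J n ^ ((n : ℝ)⁻¹)) := by
      calc Jσ n ^ ((n : ℝ)⁻¹) ≤ (2 * (ENNReal.ofReal (t ^ (n : ℝ)) * J n)) ^ ((n : ℝ)⁻¹) :=
            ENNReal.rpow_le_rpow hJσ2 hinv0
        _ = _ := by
            rw [ENNReal.mul_rpow_of_nonneg _ _ hinv0, ENNReal.mul_rpow_of_nonneg _ _ hinv0,
              hTr]
    calc ENNReal.ofReal ((n : ℝ) ^ (-p)) * Iσ n ^ ((n : ℝ)⁻¹) * Jσ n ^ ((n : ℝ)⁻¹)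
        ≤ ENNReal.ofReal ((n : ℝ) ^ (-p)) *
            ((2 : ℝ≥0∞) ^ ((n : ℝ)⁻¹) * (T * I n ^ ((n : ℝ)⁻¹))) *
            ((2 : ℝ≥0∞) ^ ((n : ℝ)⁻¹) * (T * J n ^ ((n : ℝ)⁻¹))) := by
          exact mul_le_mul' (mul_le_mul' le_rfl hIr) hJr
      _ = ((2 : ℝ≥0∞) ^ ((n : ℝ)⁻¹) * (2 : ℝ≥0∞) ^ ((n : ℝ)⁻¹) * T ^ 2) *
            (ENNReal.ofReal ((n : ℝ) ^ (-p)) * I n ^ ((n : ℝ)⁻¹) * J n ^ ((n : ℝ)⁻¹)) := by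
          ring
      _ = u n * (ENNReal.ofReal ((n : ℝ) ^ (-p)) * I n ^ ((n : ℝ)⁻¹) * J n ^ ((n : ℝ)⁻¹)) := by
          congr 2
          rw [← ENNReal.mul_rpow_of_nonneg _ _ hinv0]
          norm_num
  -- limsup of u is T^2
  have hu_tendsto : Tendsto u atTop (𝓝 (T ^ 2)) := by
    have h4 : Tendsto (fun n : ℕ => (4 : ℝ≥0∞) ^ ((n : ℝ)⁻¹)) atTop (𝓝 1) := by
      have hr : Tendsto (fun n : ℕ => (4 : ℝ) ^ ((n : ℝ)⁻¹)) atTop (𝓝 1) := by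
        have h0 : Tendsto (fun n : ℕ => ((n : ℝ))⁻¹) atTop (𝓝 0) :=
          tendsto_inv_atTop_zero.comp tendsto_natCast_atTop_atTop
        have := (tendsto_const_nhds (x := (4 : ℝ)) (f := atTop)).rpow h0
          (Or.inl (by norm_num))
        simpa using this
      have := ENNReal.tendsto_ofReal hr
      simp only [ENNReal.ofReal_one] at this
      convert this using 2 with n
      rw [show ((4:ℝ≥0∞)) = ENNReal.ofReal (4:ℝ) by norm_num,
        ENNReal.ofReal_rpow_of_pos (by norm_num : (0:ℝ) < 4)]
    have := ENNReal.Tendsto.mul_const h4 (b := T ^ 2) (Or.inl one_ne_zero)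
    simpa using this
  have hu_limsup : limsup u atTop = T ^ 2 := hu_tendsto.limsup_eq
  -- conclusion
  have hT2top : T ^ 2 ≠ ⊤ := ENNReal.pow_ne_top hTtop
  have hT2zero : T ^ 2 ≠ 0 := pow_ne_zero _ hT0
  have hfinal : Lconst p m σ ≤ T ^ 2 * Lconst p m ρ := by
    unfold Lconst
    calc liminf (fun n : ℕ =>
          ENNReal.ofReal ((n : ℝ) ^ (-p)) * Iσ n ^ ((n : ℝ)⁻¹) * Jσ n ^ ((n : ℝ)⁻¹)) atTop
        ≤ liminf (fun n : ℕ => u n *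
            (ENNReal.ofReal ((n : ℝ) ^ (-p)) * I n ^ ((n : ℝ)⁻¹) * J n ^ ((n : ℝ)⁻¹))) atTop :=
          liminf_le_liminf hFG
      _ ≤ limsup u atTop * liminf (fun n : ℕ =>
            ENNReal.ofReal ((n : ℝ) ^ (-p)) * I n ^ ((n : ℝ)⁻¹) * J n ^ ((n : ℝ)⁻¹)) atTop := by
          apply ENNReal.liminf_mul_le
          · left; rw [hu_limsup]; exact hT2zero
          · left; rw [hu_limsup]; exact hT2top
      _ = T ^ 2 * liminf (fun n : ℕ =>
            ENNReal.ofReal ((n : ℝ) ^ (-p)) * I n ^ ((n : ℝ)⁻¹) * J n ^ ((n : ℝ)⁻¹)) atTop := by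
          rw [hu_limsup]
  have hT2 : ENNReal.ofReal (t ^ 2) = T ^ 2 := ENNReal.ofReal_pow ht0.le 2
  rw [hT2]
  exact hfinal
end

section
/- Let p > 1, let (X, Σ, m) be a measure space with 0 < m(X) < ∞, and let ρ : X → (0,∞) be measurable with esssup_m ρ < ∞ and esssup_m (1/ρ) = ∞. For t > 0 define ρ_t : X → (0,∞) by ρ_t := ρ/t on {ρ ≤ t} and ρ_t := ρ on {ρ > t}. Then L_{ρ_t} ≤ 2 t (1 + (esssup_m ρ)^{−1}) · L_ρ, where for a measurable η : X → (0,∞) one sets L_η := liminf_{n→∞} n^{−p} ( ∫_X ηⁿ dm )^{1/n} ( ∫_X η^{−n} dm )^{1/n} ∈ [0,∞]. -/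
open MeasureTheory Filter Topology
open scoped ENNReal NNReal

lemma liminf_cmul (c : ℝ≥0∞) (hc : c ≠ ⊤) (b : ℕ → ℝ≥0∞) :
    Filter.liminf (fun n => c * b n) Filter.atTop = c * Filter.liminf b Filter.atTop := by
  have hmono : Monotone (fun x : ℝ≥0∞ => c * x) := fun x y h => mul_le_mul_right h c
  have := hmono.map_liminf_of_continuousAt (F := Filter.atTop) b
    ((ENNReal.continuous_const_mul hc).continuousAt)
  exact this.symm

lemma aux_liminf_le {a b : ℕ → ℝ≥0∞} {K D : ℝ≥0∞} (hK0 : K ≠ 0) (hK : K ≠ ⊤)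
    (hD0 : D ≠ 0) (hD : D ≠ ⊤)
    (h : ∀ᶠ n : ℕ in atTop, a n ≤ K * D ^ ((n : ℝ)⁻¹) * b n) :
    Filter.liminf a Filter.atTop ≤ K * Filter.liminf b Filter.atTop := by
  set L := Filter.liminf b Filter.atTop with hL_def
  -- tendsto of D ^ (1/n)
  have hd_pos : 0 < D.toReal := ENNReal.toReal_pos hD0 hD
  have hDlim : Tendsto (fun n : ℕ => D ^ ((n : ℝ)⁻¹)) atTop (𝓝 1) := by
    have h1 : Tendsto (fun n : ℕ => ((n : ℝ)⁻¹)) atTop (𝓝 0) :=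
      tendsto_inv_atTop_nhds_zero_nat
    have h2 : Tendsto (fun n : ℕ => D.toReal ^ ((n : ℝ)⁻¹)) atTop (𝓝 1) := by
      have hcont : ContinuousAt (fun y : ℝ => D.toReal ^ y) 0 := by
        have := Real.continuousAt_rpow (D.toReal, (0:ℝ)) (Or.inl hd_pos.ne')
        exact this.comp (f := fun y : ℝ => (D.toReal, y)) (by fun_prop)
      have := hcont.tendsto.comp h1
      simpa [Real.rpow_zero, Function.comp_def] using this
    have h3 : Tendsto (fun n : ℕ => ENNReal.ofReal (D.toReal ^ ((n : ℝ)⁻¹))) atTop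
        (𝓝 (ENNReal.ofReal 1)) := (ENNReal.continuous_ofReal.tendsto 1).comp h2
    have heq : ∀ n : ℕ, ENNReal.ofReal (D.toReal ^ ((n : ℝ)⁻¹)) = D ^ ((n : ℝ)⁻¹) := by
      intro n
      rw [← ENNReal.ofReal_rpow_of_pos hd_pos, ENNReal.ofReal_toReal hD]
    simpa [heq] using h3
  have key : ∀ r : ℝ≥0∞, 1 < r → r ≠ ⊤ → Filter.liminf a Filter.atTop ≤ K * r * L := by
    intro r hr hrt
    have hev : ∀ᶠ n : ℕ in atTop, D ^ ((n : ℝ)⁻¹) ≤ r := hDlim.eventually_le_const hr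
    have h1 : Filter.liminf a Filter.atTop ≤
        Filter.liminf (fun n => (K * r) * b n) Filter.atTop := by
      have hev2 : ∀ᶠ n : ℕ in atTop, a n ≤ (K * r) * b n := by
        filter_upwards [h, hev] with n h1 h2
        calc a n ≤ K * D ^ ((n : ℝ)⁻¹) * b n := h1
          _ ≤ K * r * b n := mul_le_mul' (mul_le_mul_right h2 K) le_rfl
      exact Filter.liminf_le_liminf hev2
    rw [liminf_cmul (K * r) (ENNReal.mul_ne_top hK hrt) b] at h1
    exact h1.trans_eq (by rw [hL_def])
  by_cases hL : L = ⊤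
  · rw [hL, ENNReal.mul_top hK0]; exact le_top
  refine ENNReal.le_of_forall_pos_le_add fun ε hε hKL => ?_
  by_cases hP0 : K * L = 0
  · have h2 := key 2 (by norm_num) (by norm_num)
    have : K * 2 * L = 0 := by
      rcases mul_eq_zero.1 hP0 with h | h
      · exact absurd h hK0
      · simp [h]
    exact (h2.trans_eq this).trans zero_le
  · have hP : K * L ≠ ⊤ := hKL.ne
    set r : ℝ≥0∞ := 1 + (ε : ℝ≥0∞) / (K * L) with hr_def
    have hεP : (0:ℝ≥0∞) < (ε : ℝ≥0∞) / (K * L) :=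
      ENNReal.div_pos (by exact_mod_cast hε.ne') hP
    have hr1 : 1 < r := ENNReal.lt_add_right ENNReal.one_ne_top hεP.ne'
    have hrt : r ≠ ⊤ := by
      apply ENNReal.add_ne_top.2
      exact ⟨ENNReal.one_ne_top, (ENNReal.div_lt_top ENNReal.coe_ne_top hP0).ne⟩
    have := key r hr1 hrt
    have heq : K * r * L = K * L + ε := by
      have h0 : K * r * L = (K * L) * r := by ring
      rw [h0, hr_def, mul_add, mul_one, ENNReal.mul_div_cancel hP0 hP]
    exact this.trans_eq heq

/-- Let `p > 1`, `0 < m(X) < ∞`, and `ρ : X → (0,∞)` essentially bounded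
with `1/ρ` essentially unbounded. For `t > 0` let `ρ_t := ρ/t` on `{ρ ≤ t}` and `ρ_t := ρ`
on `{ρ > t}`. Then `L_{ρ_t} ≤ 2t(1 + (esssup ρ)⁻¹) L_ρ`. -/
theorem stmt13 {X : Type*} [MeasurableSpace X] (m : MeasureTheory.Measure X) (p : ℝ)
    (hp : 1 < p) (hX0 : 0 < m Set.univ) (hXfin : m Set.univ < ⊤)
    (ρ : X → ℝ) (hmeas : Measurable ρ) (hpos : ∀ x, 0 < ρ x)
    (hbdd : ∃ C : ℝ, ∀ᵐ x ∂m, ρ x ≤ C)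
    (hessinv : essSup (fun x => ENNReal.ofReal ((ρ x)⁻¹)) m = ⊤)
    (t : ℝ) (ht0 : 0 < t) :
    Lconst p m (fun x => if ρ x ≤ t then ρ x / t else ρ x) ≤
      ENNReal.ofReal (2 * t * (1 + (essSup ρ m)⁻¹)) * Lconst p m ρ := by
  classical
  obtain ⟨C, hC⟩ := hbdd
  set S := essSup ρ m with hS_def
  have hmX_top : m Set.univ ≠ ⊤ := hXfin.ne
  have hne : (ae m).NeBot := ae_neBot.2 fun h => by simp [h] at hX0
  have hBdd : IsBoundedUnder (· ≤ ·) (ae m) ρ := ⟨C, eventually_map.2 hC⟩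
  have hS_ae : ∀ᵐ x ∂m, ρ x ≤ S := ae_le_essSup hBdd
  have hS_pos : 0 < S := by
    obtain ⟨k, hk⟩ : ∃ k : ℕ, m {x | 1/((k:ℝ)+1) ≤ ρ x} ≠ 0 := by
      by_contra hcon
      push_neg at hcon
      have hU : (⋃ k : ℕ, {x | 1/((k:ℝ)+1) ≤ ρ x}) = Set.univ := by
        ext x
        simp only [Set.mem_iUnion, Set.mem_setOf_eq, Set.mem_univ, iff_true]
        obtain ⟨k, hk⟩ := exists_nat_ge (1 / ρ x)
        refine ⟨k, ?_⟩
        rw [div_le_iff₀ (by positivity)]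
        rw [div_le_iff₀ (hpos x)] at hk
        nlinarith [hpos x]
      have h0 := measure_iUnion_null fun k => (hcon k)
      rw [hU] at h0
      exact hX0.ne' h0
    have hfreq : ∃ᶠ x in ae m, 1/((k:ℝ)+1) ≤ ρ x := frequently_ae_iff.2 hk
    have hle : 1/((k:ℝ)+1) ≤ S := le_limsup_of_frequently_le hfreq hBdd
    have hposk : (0:ℝ) < 1/((k:ℝ)+1) := by positivity
    linarith
  have hcobdd : IsCoboundedUnder (· ≤ ·) (ae m) ρ :=
    isCoboundedUnder_le_of_eventually_le (ae m) (Eventually.of_forall fun x => (hpos x).le)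
  -- positive measure sets
  have hc : m {x | S/2 ≤ ρ x} ≠ 0 := by
    intro hzero
    have hae : ∀ᵐ x ∂m, ρ x < S/2 := by
      rw [ae_iff]
      convert hzero using 2
      ext x; simp [not_lt]
    have : S ≤ S/2 := limsup_le_of_le hcobdd (hae.mono fun x hx => hx.le)
    linarith
  have hc2 : m {x | ρ x ≤ t^2/2} ≠ 0 := by
    intro hzero
    have hae : ∀ᵐ x ∂m, t^2/2 < ρ x := by
      rw [ae_iff]
      convert hzero using 2
      ext x; simp [not_lt]
    have hub : essSup (fun x => ENNReal.ofReal ((ρ x)⁻¹)) m ≤ ENNReal.ofReal (2/t^2) := by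
      refine essSup_le_of_ae_le _ ?_
      filter_upwards [hae] with x hx
      apply ENNReal.ofReal_le_ofReal
      rw [inv_le_comm₀ (hpos x) (by positivity)]
      calc (2/t^2)⁻¹ = t^2/2 := by field_simp
        _ ≤ ρ x := hx.le
    rw [hessinv] at hub
    exact (ENNReal.ofReal_lt_top.trans_le hub).ne rfl
  -- notation
  set f : X → ℝ := fun x => if ρ x ≤ t then ρ x / t else ρ x with hf_def
  have hfmeas : Measurable f :=
    Measurable.ite (measurableSet_le hmeas measurable_const) (hmeas.div_const t) hmeas
  have hfpos : ∀ x, 0 < f x := by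
    intro x
    rw [hf_def]
    dsimp only
    split_ifs
    · exact div_pos (hpos x) ht0
    · exact hpos x
  set c : ℝ≥0∞ := m {x | S/2 ≤ ρ x} with hc_def
  set c2 : ℝ≥0∞ := m {x | ρ x ≤ t^2/2} with hc2_def
  have hc_top : c ≠ ⊤ := ((measure_mono (Set.subset_univ _)).trans_lt hXfin).ne
  have hc2_top : c2 ≠ ⊤ := ((measure_mono (Set.subset_univ _)).trans_lt hXfin).ne
  set D : ℝ≥0∞ := m Set.univ / c * 2 with hD_def
  have hD0 : D ≠ 0 := by
    rw [hD_def]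
    exact mul_ne_zero (ENNReal.div_pos hX0.ne' hc_top).ne' two_ne_zero
  have hDtop : D ≠ ⊤ := by
    rw [hD_def]
    exact ENNReal.mul_ne_top (ENNReal.div_lt_top hmX_top hc).ne (by norm_num)
  set K : ℝ≥0∞ := ENNReal.ofReal (2 * t * (1 + S⁻¹)) with hK_def
  have hK0 : K ≠ 0 := by
    rw [hK_def]
    exact (ENNReal.ofReal_pos.2 (by positivity)).ne'
  have hKtop : K ≠ ⊤ := ENNReal.ofReal_ne_top
  obtain ⟨N₀, hN₀⟩ := ENNReal.exists_nat_gt (ENNReal.div_lt_top hmX_top hc2).ne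
  -- the eventual comparison
  have hev : ∀ᶠ n : ℕ in atTop,
      ENNReal.ofReal ((n : ℝ) ^ (-p)) *
          (∫⁻ x, ENNReal.ofReal (f x ^ (n : ℝ)) ∂m) ^ ((n : ℝ)⁻¹) *
          (∫⁻ x, ENNReal.ofReal (f x ^ (-(n : ℝ))) ∂m) ^ ((n : ℝ)⁻¹) ≤
        K * D ^ ((n : ℝ)⁻¹) *
          (ENNReal.ofReal ((n : ℝ) ^ (-p)) *
            (∫⁻ x, ENNReal.ofReal (ρ x ^ (n : ℝ)) ∂m) ^ ((n : ℝ)⁻¹) *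
            (∫⁻ x, ENNReal.ofReal (ρ x ^ (-(n : ℝ))) ∂m) ^ ((n : ℝ)⁻¹)) := by
    rw [eventually_atTop]
    refine ⟨max 1 N₀, fun n hn => ?_⟩
    have hn1 : 1 ≤ n := le_trans (le_max_left _ _) hn
    have hnN : N₀ ≤ n := le_trans (le_max_right _ _) hn
    have hn0 : (n : ℝ) ≠ 0 := Nat.cast_ne_zero.2 (by omega)
    have hinv_nonneg : (0:ℝ) ≤ (n : ℝ)⁻¹ := by positivity
    have hofr : ∀ a : ℝ, 0 < a →
        (ENNReal.ofReal (a ^ (n : ℝ))) ^ ((n : ℝ)⁻¹) = ENNReal.ofReal a := by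
      intro a ha
      rw [ENNReal.ofReal_rpow_of_pos (by positivity), ← Real.rpow_mul ha.le,
        mul_inv_cancel₀ hn0, Real.rpow_one]
    set u' : ℝ≥0∞ := ∫⁻ x, ENNReal.ofReal (f x ^ (n : ℝ)) ∂m with hu'_def
    set u : ℝ≥0∞ := ∫⁻ x, ENNReal.ofReal (ρ x ^ (n : ℝ)) ∂m with hu_def
    set v' : ℝ≥0∞ := ∫⁻ x, ENNReal.ofReal (f x ^ (-(n : ℝ))) ∂m with hv'_def
    set v : ℝ≥0∞ := ∫⁻ x, ENNReal.ofReal (ρ x ^ (-(n : ℝ))) ∂m with hv_def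
    -- Step A
    have hA : u' ≤ ENNReal.ofReal ((1+S) ^ (n:ℝ)) * m Set.univ := by
      have hfA : ∀ᵐ x ∂m, ENNReal.ofReal (f x ^ (n:ℝ)) ≤
          ENNReal.ofReal ((1+S) ^ (n:ℝ)) := by
        filter_upwards [hS_ae] with x hx
        apply ENNReal.ofReal_le_ofReal
        apply Real.rpow_le_rpow (hfpos x).le ?_ (Nat.cast_nonneg n)
        rw [hf_def]
        dsimp only
        split_ifs with h
        · have h1 : ρ x / t ≤ 1 := div_le_one_of_le₀ h ht0.le
          linarith
        · linarith
      calc u' ≤ ∫⁻ _x, ENNReal.ofReal ((1+S) ^ (n:ℝ)) ∂m := lintegral_mono_ae hfA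
        _ = ENNReal.ofReal ((1+S) ^ (n:ℝ)) * m Set.univ := lintegral_const _
    -- Step B
    have hB : ENNReal.ofReal ((S/2) ^ (n:ℝ)) * c ≤ u := by
      have hmsets : MeasurableSet {x | S/2 ≤ ρ x} := measurableSet_le measurable_const hmeas
      calc ENNReal.ofReal ((S/2) ^ (n:ℝ)) * c
          = ∫⁻ _x in {x | S/2 ≤ ρ x}, ENNReal.ofReal ((S/2) ^ (n:ℝ)) ∂m :=
            (setLIntegral_const _ _).symm
        _ ≤ ∫⁻ x in {x | S/2 ≤ ρ x}, ENNReal.ofReal (ρ x ^ (n:ℝ)) ∂m :=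
            setLIntegral_mono' hmsets fun x hx =>
              ENNReal.ofReal_le_ofReal (Real.rpow_le_rpow (by positivity) hx (Nat.cast_nonneg n))
        _ ≤ u := setLIntegral_le_lintegral _ _
    -- Step C : combined first-factor bound
    have hC : u' ^ ((n:ℝ)⁻¹) ≤
        ENNReal.ofReal (2*(1+S)/S) * (m Set.univ / c) ^ ((n:ℝ)⁻¹) * u ^ ((n:ℝ)⁻¹) := by
      have h1 : u' ^ ((n:ℝ)⁻¹) ≤ ENNReal.ofReal (1+S) * (m Set.univ) ^ ((n:ℝ)⁻¹) := by
        calc u' ^ ((n:ℝ)⁻¹)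
            ≤ (ENNReal.ofReal ((1+S) ^ (n:ℝ)) * m Set.univ) ^ ((n:ℝ)⁻¹) :=
              ENNReal.rpow_le_rpow hA hinv_nonneg
          _ = ENNReal.ofReal (1+S) * (m Set.univ) ^ ((n:ℝ)⁻¹) := by
              rw [ENNReal.mul_rpow_of_nonneg _ _ hinv_nonneg, hofr _ (by positivity)]
      have h2 : ENNReal.ofReal (S/2) * c ^ ((n:ℝ)⁻¹) ≤ u ^ ((n:ℝ)⁻¹) := by
        calc ENNReal.ofReal (S/2) * c ^ ((n:ℝ)⁻¹)
            = (ENNReal.ofReal ((S/2) ^ (n:ℝ)) * c) ^ ((n:ℝ)⁻¹) := by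
              rw [ENNReal.mul_rpow_of_nonneg _ _ hinv_nonneg, hofr _ (by positivity)]
          _ ≤ u ^ ((n:ℝ)⁻¹) := ENNReal.rpow_le_rpow hB hinv_nonneg
      have e1 : ENNReal.ofReal (1+S) = ENNReal.ofReal (2*(1+S)/S) * ENNReal.ofReal (S/2) := by
        rw [← ENNReal.ofReal_mul (by positivity)]
        congr 1
        field_simp
      have e2 : (m Set.univ) ^ ((n:ℝ)⁻¹) =
          (m Set.univ / c) ^ ((n:ℝ)⁻¹) * c ^ ((n:ℝ)⁻¹) := by
        rw [← ENNReal.mul_rpow_of_nonneg _ _ hinv_nonneg, ENNReal.div_mul_cancel hc hc_top]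
      calc u' ^ ((n:ℝ)⁻¹) ≤ ENNReal.ofReal (1+S) * (m Set.univ) ^ ((n:ℝ)⁻¹) := h1
        _ = ENNReal.ofReal (2*(1+S)/S) * (m Set.univ / c) ^ ((n:ℝ)⁻¹) *
            (ENNReal.ofReal (S/2) * c ^ ((n:ℝ)⁻¹)) := by
            rw [e1, e2]; ring
        _ ≤ _ := mul_le_mul_right h2 _
    -- Step D : pointwise bound for the inverse part
    have hmeas_rpow : Measurable fun x => ENNReal.ofReal (ρ x ^ (-(n:ℝ))) :=
      (hmeas.pow measurable_const).ennreal_ofReal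
    have hD' : v' ≤ ENNReal.ofReal (t ^ (n:ℝ)) * v + ENNReal.ofReal (t ^ (-(n:ℝ))) * m Set.univ := by
      have hDpt : ∀ x, ENNReal.ofReal (f x ^ (-(n:ℝ))) ≤
          ENNReal.ofReal (t ^ (n:ℝ)) * ENNReal.ofReal (ρ x ^ (-(n:ℝ))) +
            ENNReal.ofReal (t ^ (-(n:ℝ))) := by
        intro x
        rw [← ENNReal.ofReal_mul (by positivity)]
        rw [hf_def]
        dsimp only
        split_ifs with h
        · have heq : (ρ x / t) ^ (-(n:ℝ)) = t ^ (n:ℝ) * ρ x ^ (-(n:ℝ)) := by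
            rw [div_eq_mul_inv, Real.mul_rpow (hpos x).le (inv_nonneg.2 ht0.le),
              Real.inv_rpow ht0.le, ← Real.rpow_neg ht0.le, neg_neg, mul_comm]
          rw [heq]
          exact le_self_add
        · have hle : ρ x ^ (-(n:ℝ)) ≤ t ^ (-(n:ℝ)) :=
            Real.rpow_le_rpow_of_nonpos ht0 (not_le.1 h).le
              (neg_nonpos.2 (Nat.cast_nonneg n))
          exact (ENNReal.ofReal_le_ofReal hle).trans le_add_self
      calc v' ≤ ∫⁻ x, (ENNReal.ofReal (t ^ (n:ℝ)) * ENNReal.ofReal (ρ x ^ (-(n:ℝ))) +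
            ENNReal.ofReal (t ^ (-(n:ℝ)))) ∂m := lintegral_mono hDpt
        _ = ENNReal.ofReal (t ^ (n:ℝ)) * v + ENNReal.ofReal (t ^ (-(n:ℝ))) * m Set.univ := by
            rw [lintegral_add_right _ measurable_const, lintegral_const_mul _ hmeas_rpow,
              lintegral_const]
    -- Step E
    have hE : ENNReal.ofReal ((t^2/2) ^ (-(n:ℝ))) * c2 ≤ v := by
      have hmsets : MeasurableSet {x | ρ x ≤ t^2/2} := measurableSet_le hmeas measurable_const
      calc ENNReal.ofReal ((t^2/2) ^ (-(n:ℝ))) * c2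
          = ∫⁻ _x in {x | ρ x ≤ t^2/2}, ENNReal.ofReal ((t^2/2) ^ (-(n:ℝ))) ∂m :=
            (setLIntegral_const _ _).symm
        _ ≤ ∫⁻ x in {x | ρ x ≤ t^2/2}, ENNReal.ofReal (ρ x ^ (-(n:ℝ))) ∂m :=
            setLIntegral_mono' hmsets fun x hx =>
              ENNReal.ofReal_le_ofReal
                (Real.rpow_le_rpow_of_nonpos (hpos x) hx (neg_nonpos.2 (Nat.cast_nonneg n)))
        _ ≤ v := setLIntegral_le_lintegral _ _
    -- Step F
    have hF : ENNReal.ofReal (t ^ (-(n:ℝ))) * m Set.univ ≤ ENNReal.ofReal (t ^ (n:ℝ)) * v := by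
      have hmX_le : m Set.univ ≤ ENNReal.ofReal ((2:ℝ) ^ (n:ℝ)) * c2 := by
        have h2 : (N₀ : ℝ≥0∞) ≤ ENNReal.ofReal ((2:ℝ) ^ (n:ℝ)) := by
          rw [Real.rpow_natCast]
          calc (N₀ : ℝ≥0∞) ≤ ((2^n : ℕ) : ℝ≥0∞) := by
                exact_mod_cast (le_trans hnN (Nat.lt_two_pow_self).le)
            _ = ENNReal.ofReal ((2:ℝ)^n) := by
                rw [← ENNReal.ofReal_natCast]
                norm_num
        calc m Set.univ = m Set.univ / c2 * c2 := (ENNReal.div_mul_cancel hc2 hc2_top).symm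
          _ ≤ (N₀ : ℝ≥0∞) * c2 := mul_le_mul_left hN₀.le _
          _ ≤ ENNReal.ofReal ((2:ℝ) ^ (n:ℝ)) * c2 := mul_le_mul_left h2 _
      have hreal : t ^ (-(n:ℝ)) * (2:ℝ) ^ (n:ℝ) = t ^ (n:ℝ) * (t^2/2) ^ (-(n:ℝ)) := by
        rw [Real.rpow_neg ht0.le, Real.rpow_neg (by positivity), Real.rpow_natCast,
          Real.rpow_natCast, Real.rpow_natCast]
        have h2n : ((t:ℝ)^2/2)^n * 2^n = (t^n)*(t^n) := by
          rw [← mul_pow, div_mul_cancel₀ _ (two_ne_zero (α := ℝ))]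
          ring
        field_simp
        rw [← mul_pow, mul_div_cancel₀ _ (two_ne_zero (α := ℝ))]
        ring
      calc ENNReal.ofReal (t ^ (-(n:ℝ))) * m Set.univ
          ≤ ENNReal.ofReal (t ^ (-(n:ℝ))) * (ENNReal.ofReal ((2:ℝ) ^ (n:ℝ)) * c2) :=
            mul_le_mul_right hmX_le _
        _ = ENNReal.ofReal (t ^ (n:ℝ)) * (ENNReal.ofReal ((t^2/2) ^ (-(n:ℝ))) * c2) := by
            rw [← mul_assoc, ← mul_assoc, ← ENNReal.ofReal_mul (by positivity),
              ← ENNReal.ofReal_mul (by positivity), hreal]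
        _ ≤ ENNReal.ofReal (t ^ (n:ℝ)) * v := mul_le_mul_right hE _
    -- Step G/H
    have hG : v' ≤ 2 * (ENNReal.ofReal (t ^ (n:ℝ)) * v) := by
      calc v' ≤ ENNReal.ofReal (t ^ (n:ℝ)) * v + ENNReal.ofReal (t ^ (-(n:ℝ))) * m Set.univ := hD'
        _ ≤ ENNReal.ofReal (t ^ (n:ℝ)) * v + ENNReal.ofReal (t ^ (n:ℝ)) * v := add_le_add_right hF _
        _ = 2 * (ENNReal.ofReal (t ^ (n:ℝ)) * v) := (two_mul _).symm
    have hH : v' ^ ((n:ℝ)⁻¹) ≤ (2:ℝ≥0∞) ^ ((n:ℝ)⁻¹) * (ENNReal.ofReal t * v ^ ((n:ℝ)⁻¹)) := by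
      calc v' ^ ((n:ℝ)⁻¹) ≤ (2 * (ENNReal.ofReal (t ^ (n:ℝ)) * v)) ^ ((n:ℝ)⁻¹) :=
            ENNReal.rpow_le_rpow hG hinv_nonneg
        _ = (2:ℝ≥0∞) ^ ((n:ℝ)⁻¹) * (ENNReal.ofReal t * v ^ ((n:ℝ)⁻¹)) := by
            rw [ENNReal.mul_rpow_of_nonneg _ _ hinv_nonneg,
              ENNReal.mul_rpow_of_nonneg _ _ hinv_nonneg, hofr t ht0]
    -- assemble
    have hKeq : ENNReal.ofReal (2*(1+S)/S) * ENNReal.ofReal t = K := by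
      rw [hK_def, ← ENNReal.ofReal_mul (by positivity)]
      congr 1
      field_simp
      ring
    have hDsplit : (m Set.univ / c) ^ ((n:ℝ)⁻¹) * (2:ℝ≥0∞) ^ ((n:ℝ)⁻¹) = D ^ ((n:ℝ)⁻¹) := by
      rw [hD_def, ENNReal.mul_rpow_of_nonneg _ _ hinv_nonneg]
    calc ENNReal.ofReal ((n : ℝ) ^ (-p)) * u' ^ ((n:ℝ)⁻¹) * v' ^ ((n:ℝ)⁻¹)
        ≤ ENNReal.ofReal ((n : ℝ) ^ (-p)) *
            (ENNReal.ofReal (2*(1+S)/S) * (m Set.univ / c) ^ ((n:ℝ)⁻¹) * u ^ ((n:ℝ)⁻¹)) *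
            ((2:ℝ≥0∞) ^ ((n:ℝ)⁻¹) * (ENNReal.ofReal t * v ^ ((n:ℝ)⁻¹))) :=
          mul_le_mul' (mul_le_mul_right hC _) hH
      _ = (ENNReal.ofReal (2*(1+S)/S) * ENNReal.ofReal t) *
            ((m Set.univ / c) ^ ((n:ℝ)⁻¹) * (2:ℝ≥0∞) ^ ((n:ℝ)⁻¹)) *
            (ENNReal.ofReal ((n : ℝ) ^ (-p)) * u ^ ((n:ℝ)⁻¹) * v ^ ((n:ℝ)⁻¹)) := by ring
      _ = K * D ^ ((n:ℝ)⁻¹) *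
            (ENNReal.ofReal ((n : ℝ) ^ (-p)) * u ^ ((n:ℝ)⁻¹) * v ^ ((n:ℝ)⁻¹)) := by
          rw [hKeq, hDsplit]
  -- conclude
  simp only [Lconst]
  exact aux_liminf_le hK0 hKtop hD0 hDtop hev
end

section
/- Let (X, Σ, m) be a measure space with m(X) < ∞, let ρ : X → (0,∞) be measurable, and suppose there exists t > 0 such that ∫_X exp(t·ρ) dm < ∞ and ∫_X exp(t/ρ) dm < ∞. Then liminf_{n→∞} n^{−2} ( ∫_X ρⁿ dm )^{1/n} ( ∫_X ρ^{−n} dm )^{1/n} < ∞, i.e. ρ belongs to the Zhikov class Z₂(m). -/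
open MeasureTheory Filter Topology
open scoped ENNReal NNReal

lemma pow_div_factorial_le_exp (y : ℝ) (hy : 0 ≤ y) (n : ℕ) :
    y ^ n / n.factorial ≤ Real.exp y := by
  refine le_trans ?_ (Real.sum_le_exp_of_nonneg hy (n + 1))
  have := Finset.single_le_sum (f := fun i : ℕ => y ^ i / i.factorial)
    (fun i _ => by positivity) (Finset.self_mem_range_succ n)
  simpa using this

lemma key_int {X : Type*} [MeasurableSpace X] (m : MeasureTheory.Measure X)
    (t : ℝ) (ht : 0 < t) (n : ℕ) (g : X → ℝ) (hg : ∀ x, 0 ≤ g x) :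
    ∫⁻ x, ENNReal.ofReal (g x ^ n) ∂m ≤
      ENNReal.ofReal (n.factorial / t ^ n) * ∫⁻ x, ENNReal.ofReal (Real.exp (t * g x)) ∂m := by
  rw [← lintegral_const_mul' _ _ ENNReal.ofReal_ne_top]
  refine lintegral_mono fun x => ?_
  rw [← ENNReal.ofReal_mul (by positivity)]
  refine ENNReal.ofReal_le_ofReal ?_
  have h := pow_div_factorial_le_exp (t * g x) (mul_nonneg ht.le (hg x)) n
  have hfac : (0:ℝ) < (n.factorial : ℝ) := by positivity
  rw [div_le_iff₀ hfac] at h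
  rw [div_mul_eq_mul_div, le_div_iff₀ (pow_pos ht n)]
  calc g x ^ n * t ^ n = (t * g x) ^ n := by ring
    _ ≤ Real.exp (t * g x) * n.factorial := h
    _ = (n.factorial : ℝ) * Real.exp (t * g x) := mul_comm _ _

lemma rpow_fac_le {t : ℝ} (ht : 0 < t) {n : ℕ} (hn : 1 ≤ n) :
    ENNReal.ofReal ((n.factorial : ℝ) / t ^ n) ^ ((n : ℝ)⁻¹) ≤
      ENNReal.ofReal n * (ENNReal.ofReal t)⁻¹ := by
  have hnn : (0:ℝ) ≤ (n : ℝ)⁻¹ := by positivity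
  have h1 : ENNReal.ofReal ((n.factorial : ℝ) / t ^ n) ≤
      ENNReal.ofReal (((n : ℝ) / t) ^ n) := by
    apply ENNReal.ofReal_le_ofReal
    rw [div_pow, div_le_div_iff₀ (by positivity) (by positivity)]
    have : (n.factorial : ℝ) ≤ (n : ℝ) ^ n := by
      exact_mod_cast Nat.factorial_le_pow n
    nlinarith [pow_pos ht n]
  calc ENNReal.ofReal ((n.factorial : ℝ) / t ^ n) ^ ((n : ℝ)⁻¹)
      ≤ ENNReal.ofReal (((n : ℝ) / t) ^ n) ^ ((n : ℝ)⁻¹) :=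
        ENNReal.rpow_le_rpow h1 hnn
    _ = ENNReal.ofReal ((n : ℝ) / t) := by
        rw [ENNReal.ofReal_pow (by positivity), ← ENNReal.rpow_natCast _ n,
          ← ENNReal.rpow_mul, mul_inv_cancel₀ (by exact_mod_cast Nat.one_le_iff_ne_zero.mp hn),
          ENNReal.rpow_one]
    _ = ENNReal.ofReal n * (ENNReal.ofReal t)⁻¹ := by
        rw [ENNReal.ofReal_div_of_pos ht, div_eq_mul_inv]

/-- If `m(X) < ∞`, `ρ : X → (0,∞)` is measurable, and there is `t > 0`
with `∫ exp(tρ) dm < ∞` and `∫ exp(t/ρ) dm < ∞`, then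
`liminf_n n^{−2} (∫ ρ^n dm)^{1/n} (∫ ρ^{−n} dm)^{1/n} < ∞`, i.e. `ρ ∈ Z₂(m)`. -/
theorem stmt14 {X : Type*} [MeasurableSpace X] (m : MeasureTheory.Measure X)
    (hXfin : m Set.univ < ⊤)
    (ρ : X → ℝ) (hmeas : Measurable ρ) (hpos : ∀ x, 0 < ρ x)
    (h : ∃ t : ℝ, 0 < t ∧
      (∫⁻ x, ENNReal.ofReal (Real.exp (t * ρ x)) ∂m) < ⊤ ∧
      (∫⁻ x, ENNReal.ofReal (Real.exp (t / ρ x)) ∂m) < ⊤) :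
    Lconst 2 m ρ < ⊤ := by
  obtain ⟨t, ht, hA, hB⟩ := h
  set A := ∫⁻ x, ENNReal.ofReal (Real.exp (t * ρ x)) ∂m with hAdef
  set B := ∫⁻ x, ENNReal.ofReal (Real.exp (t / ρ x)) ∂m with hBdef
  set T : ℝ≥0∞ := ENNReal.ofReal t with hTdef
  have hTpos : 0 < T := ENNReal.ofReal_pos.mpr ht
  have hTinv : T⁻¹ < ⊤ := ENNReal.inv_lt_top.mpr hTpos
  set C : ℝ≥0∞ := T⁻¹ * T⁻¹ * max A 1 * max B 1 with hCdef
  have hCtop : C < ⊤ := by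
    have hA1 : max A 1 ≠ ⊤ := (max_lt hA ENNReal.one_lt_top).ne
    have hB1 : max B 1 ≠ ⊤ := (max_lt hB ENNReal.one_lt_top).ne
    rw [hCdef, lt_top_iff_ne_top]
    exact ENNReal.mul_ne_top (ENNReal.mul_ne_top (ENNReal.mul_ne_top hTinv.ne hTinv.ne) hA1) hB1
  have hbound : ∀ᶠ n : ℕ in atTop,
      ENNReal.ofReal ((n : ℝ) ^ (-(2:ℝ))) *
        (∫⁻ x, ENNReal.ofReal (ρ x ^ (n : ℝ)) ∂m) ^ ((n : ℝ)⁻¹) *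
        (∫⁻ x, ENNReal.ofReal (ρ x ^ (-(n : ℝ))) ∂m) ^ ((n : ℝ)⁻¹) ≤ C := by
    filter_upwards [eventually_ge_atTop 1] with n hn
    have hn0 : (0:ℝ) < n := by exact_mod_cast hn
    have hinvnn : (0:ℝ) ≤ (n : ℝ)⁻¹ := by positivity
    set N : ℝ≥0∞ := ENNReal.ofReal n with hNdef
    have hN0 : N ≠ 0 := (ENNReal.ofReal_pos.mpr hn0).ne'
    have h1 : ∫⁻ x, ENNReal.ofReal (ρ x ^ (n : ℝ)) ∂m ≤
        ENNReal.ofReal ((n.factorial : ℝ) / t ^ n) * A := by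
      simp_rw [Real.rpow_natCast]
      exact key_int m t ht n ρ (fun x => (hpos x).le)
    have h2 : ∫⁻ x, ENNReal.ofReal (ρ x ^ (-(n : ℝ))) ∂m ≤
        ENNReal.ofReal ((n.factorial : ℝ) / t ^ n) * B := by
      have e1 : ∀ x, ρ x ^ (-(n:ℝ)) = (ρ x)⁻¹ ^ n := fun x => by
        rw [Real.rpow_neg (hpos x).le, Real.rpow_natCast, inv_pow]
      simp_rw [e1]
      have hkey := key_int m t ht n (fun x => (ρ x)⁻¹)
        (fun x => inv_nonneg.mpr (hpos x).le)
      rw [hBdef]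
      simpa [div_eq_mul_inv] using hkey
    have hr1 : (∫⁻ x, ENNReal.ofReal (ρ x ^ (n : ℝ)) ∂m) ^ ((n : ℝ)⁻¹) ≤
        N * T⁻¹ * A ^ ((n : ℝ)⁻¹) := by
      calc (∫⁻ x, ENNReal.ofReal (ρ x ^ (n : ℝ)) ∂m) ^ ((n : ℝ)⁻¹)
          ≤ (ENNReal.ofReal ((n.factorial : ℝ) / t ^ n) * A) ^ ((n : ℝ)⁻¹) :=
            ENNReal.rpow_le_rpow h1 hinvnn
        _ = ENNReal.ofReal ((n.factorial : ℝ) / t ^ n) ^ ((n : ℝ)⁻¹) * A ^ ((n : ℝ)⁻¹) :=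
            ENNReal.mul_rpow_of_nonneg _ _ hinvnn
        _ ≤ N * T⁻¹ * A ^ ((n : ℝ)⁻¹) := mul_le_mul_left (rpow_fac_le ht hn) _
    have hr2 : (∫⁻ x, ENNReal.ofReal (ρ x ^ (-(n : ℝ))) ∂m) ^ ((n : ℝ)⁻¹) ≤
        N * T⁻¹ * B ^ ((n : ℝ)⁻¹) := by
      calc (∫⁻ x, ENNReal.ofReal (ρ x ^ (-(n : ℝ))) ∂m) ^ ((n : ℝ)⁻¹)
          ≤ (ENNReal.ofReal ((n.factorial : ℝ) / t ^ n) * B) ^ ((n : ℝ)⁻¹) :=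
            ENNReal.rpow_le_rpow h2 hinvnn
        _ = ENNReal.ofReal ((n.factorial : ℝ) / t ^ n) ^ ((n : ℝ)⁻¹) * B ^ ((n : ℝ)⁻¹) :=
            ENNReal.mul_rpow_of_nonneg _ _ hinvnn
        _ ≤ N * T⁻¹ * B ^ ((n : ℝ)⁻¹) := mul_le_mul_left (rpow_fac_le ht hn) _
    have hNN : ENNReal.ofReal ((n : ℝ) ^ (-(2:ℝ))) * N * N = 1 := by
      rw [hNdef, ← ENNReal.ofReal_rpow_of_pos hn0, ENNReal.rpow_neg,
        show ((2:ℝ)) = ((2:ℕ):ℝ) from by norm_num, ENNReal.rpow_natCast, sq,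
        mul_assoc]
      exact ENNReal.inv_mul_cancel (mul_ne_zero hN0 hN0)
        (ENNReal.mul_ne_top ENNReal.ofReal_ne_top ENNReal.ofReal_ne_top)
    have hAle : A ^ ((n : ℝ)⁻¹) ≤ max A 1 := by
      rcases le_total A 1 with h' | h'
      · refine le_trans ?_ (le_max_right _ _)
        simpa using ENNReal.rpow_le_rpow h' hinvnn
      · refine le_trans ?_ (le_max_left _ _)
        calc A ^ ((n : ℝ)⁻¹) ≤ A ^ (1:ℝ) :=
              ENNReal.rpow_le_rpow_of_exponent_le h' (by
                rw [inv_le_one_iff₀]; right; exact_mod_cast hn)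
          _ = A := ENNReal.rpow_one _
    have hBle : B ^ ((n : ℝ)⁻¹) ≤ max B 1 := by
      rcases le_total B 1 with h' | h'
      · refine le_trans ?_ (le_max_right _ _)
        simpa using ENNReal.rpow_le_rpow h' hinvnn
      · refine le_trans ?_ (le_max_left _ _)
        calc B ^ ((n : ℝ)⁻¹) ≤ B ^ (1:ℝ) :=
              ENNReal.rpow_le_rpow_of_exponent_le h' (by
                rw [inv_le_one_iff₀]; right; exact_mod_cast hn)
          _ = B := ENNReal.rpow_one _
    calc ENNReal.ofReal ((n : ℝ) ^ (-(2:ℝ))) *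
          (∫⁻ x, ENNReal.ofReal (ρ x ^ (n : ℝ)) ∂m) ^ ((n : ℝ)⁻¹) *
          (∫⁻ x, ENNReal.ofReal (ρ x ^ (-(n : ℝ))) ∂m) ^ ((n : ℝ)⁻¹)
        ≤ ENNReal.ofReal ((n : ℝ) ^ (-(2:ℝ))) *
            (N * T⁻¹ * A ^ ((n : ℝ)⁻¹)) * (N * T⁻¹ * B ^ ((n : ℝ)⁻¹)) :=
          mul_le_mul' (mul_le_mul' le_rfl hr1) hr2
      _ = (ENNReal.ofReal ((n : ℝ) ^ (-(2:ℝ))) * N * N) *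
            (T⁻¹ * T⁻¹ * A ^ ((n : ℝ)⁻¹) * B ^ ((n : ℝ)⁻¹)) := by ring
      _ = T⁻¹ * T⁻¹ * A ^ ((n : ℝ)⁻¹) * B ^ ((n : ℝ)⁻¹) := by rw [hNN, one_mul]
      _ ≤ C := by
          rw [hCdef]
          exact mul_le_mul' (mul_le_mul' le_rfl hAle) hBle
  have hlim : Lconst 2 m ρ ≤ C := by
    rw [Lconst]
    exact Filter.liminf_le_of_frequently_le hbound.frequently
  exact lt_of_le_of_lt hlim hCtop
end

section
/- Let B := { x ∈ ℝ² : |x| < 1 } be the open unit ball with 2-dimensional Lebesgue measure, and define ρ : B → (0,∞) by ρ(x) := log(e/|x|) if x₁x₂ > 0, ρ(x) := 1/log(e/|x|) if x₁x₂ < 0, and ρ(x) := 1 if x₁x₂ = 0 (note log(e/|x|) ≥ 1 on B). Then both x ↦ exp(ρ(x)) and x ↦ exp(1/ρ(x)) are Lebesgue-integrable on B; consequently liminf_{n→∞} n^{−2} ( ∫_B ρⁿ dx )^{1/n} ( ∫_B ρ^{−n} dx )^{1/n} < ∞, i.e. ρ belongs to the Zhikov class Z₂. -/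
open MeasureTheory Filter Topology
open scoped ENNReal NNReal

/-- Zhikov's weight on the unit ball of `ℝ²`: `ρ(x) = log(e/|x|)` if `x₁x₂ > 0`,
`ρ(x) = 1/log(e/|x|)` if `x₁x₂ < 0`, and `ρ(x) = 1` if `x₁x₂ = 0`. -/
noncomputable def zhikovWeight (x : EuclideanSpace ℝ (Fin 2)) : ℝ :=
  if 0 < x 0 * x 1 then Real.log (Real.exp 1 / ‖x‖)
  else if x 0 * x 1 < 0 then 1 / Real.log (Real.exp 1 / ‖x‖)
  else 1


section ZhikovAux
open Set Metric

lemma zhikov_measurable : Measurable zhikovWeight := by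
  unfold zhikovWeight
  have h01 : Measurable fun x : EuclideanSpace ℝ (Fin 2) => x 0 * x 1 := by fun_prop
  have hlog : Measurable fun x : EuclideanSpace ℝ (Fin 2) => Real.log (Real.exp 1 / ‖x‖) :=
    Real.measurable_log.comp (measurable_const.div measurable_norm)
  exact Measurable.ite (measurableSet_lt measurable_const h01) hlog
    (Measurable.ite (measurableSet_lt h01 measurable_const)
      (measurable_const.div hlog) measurable_const)

lemma zhikov_log_ge {x : EuclideanSpace ℝ (Fin 2)} (hx : ‖x‖ < 1) (hx0 : x ≠ 0) :
    1 ≤ Real.log (Real.exp 1 / ‖x‖) := by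
  have hn : 0 < ‖x‖ := norm_pos_iff.2 hx0
  have he : Real.exp 1 ≤ Real.exp 1 / ‖x‖ := by
    rw [le_div_iff₀ hn]
    nlinarith [Real.exp_pos 1]
  exact (Real.le_log_iff_exp_le (by positivity)).2 he

lemma zhikov_pos {x : EuclideanSpace ℝ (Fin 2)} (hx : ‖x‖ < 1) : 0 < zhikovWeight x := by
  unfold zhikovWeight
  split_ifs with h1 h2
  · have hx0 : x ≠ 0 := by rintro rfl; simp at h1
    linarith [zhikov_log_ge hx hx0]
  · have hx0 : x ≠ 0 := by rintro rfl; simp at h2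
    have := zhikov_log_ge hx hx0
    positivity
  · norm_num

lemma zhikov_exp_le {x : EuclideanSpace ℝ (Fin 2)} (hx : ‖x‖ < 1) (hx0 : x ≠ 0) :
    Real.exp (zhikovWeight x) ≤ Real.exp 1 / ‖x‖ ∧
      Real.exp (1 / zhikovWeight x) ≤ Real.exp 1 / ‖x‖ := by
  have hn : 0 < ‖x‖ := norm_pos_iff.2 hx0
  have hL := zhikov_log_ge hx hx0
  have he : Real.exp 1 ≤ Real.exp 1 / ‖x‖ := by
    rw [le_div_iff₀ hn]; nlinarith [Real.exp_pos 1]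
  have hexplog : Real.exp (Real.log (Real.exp 1 / ‖x‖)) = Real.exp 1 / ‖x‖ :=
    Real.exp_log (by positivity)
  have hinv : Real.exp (1 / Real.log (Real.exp 1 / ‖x‖)) ≤ Real.exp 1 / ‖x‖ := by
    refine le_trans ?_ he
    rw [Real.exp_le_exp]
    rw [div_le_one (by linarith)]
    exact hL
  unfold zhikovWeight
  split_ifs with h1 h2
  · exact ⟨le_of_eq hexplog, hinv⟩
  · constructor
    · exact hinv
    · rw [one_div_one_div]
      exact le_of_eq hexplog
  · simp only [div_one]
    exact ⟨he, he⟩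

lemma pow_le_factorial_mul_exp {t : ℝ} (ht : 0 ≤ t) (n : ℕ) :
    t ^ n ≤ (n.factorial : ℝ) * Real.exp t := by
  have h := Real.sum_le_exp_of_nonneg ht (n + 1)
  have h2 : t ^ n / (n.factorial : ℝ) ≤ Real.exp t := by
    refine le_trans ?_ h
    exact Finset.single_le_sum (f := fun i => t ^ i / (i.factorial : ℝ))
      (fun i _ => by positivity) (Finset.self_mem_range_succ n)
  rw [div_le_iff₀ (by positivity)] at h2
  linarith

lemma finite_master :
    (∫⁻ x in Metric.ball (0 : EuclideanSpace ℝ (Fin 2)) 1,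
      ENNReal.ofReal (Real.exp 1 / ‖x‖)) < ⊤ := by
  set e : ℝ := Real.exp 1 with he_def
  have he : 0 < e := Real.exp_pos 1
  set μ := volume.restrict (Metric.ball (0 : EuclideanSpace ℝ (Fin 2)) 1) with hμ
  have hnn : 0 ≤ᵐ[μ] fun x : EuclideanSpace ℝ (Fin 2) => e / ‖x‖ :=
    Filter.Eventually.of_forall fun x => by positivity
  have hm : AEMeasurable (fun x : EuclideanSpace ℝ (Fin 2) => e / ‖x‖) μ :=
    (measurable_const.div measurable_norm).aemeasurable
  rw [lintegral_eq_lintegral_meas_le μ hnn hm]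
  set A := volume (Metric.ball (0 : EuclideanSpace ℝ (Fin 2)) 1) with hA_def
  have hA : A < ⊤ := measure_ball_lt_top
  have hsub : ∀ t : ℝ, 0 < t →
      {a : EuclideanSpace ℝ (Fin 2) | t ≤ e / ‖a‖} ⊆ Metric.closedBall 0 (e / t) := by
    intro t ht a ha
    simp only [mem_setOf_eq] at ha
    rcases eq_or_ne a 0 with rfl | ha0
    · simp only [norm_zero, div_zero] at ha; linarith
    · have hn : 0 < ‖a‖ := norm_pos_iff.2 ha0
      rw [mem_closedBall_zero_iff, le_div_iff₀ ht]
      rw [le_div_iff₀ hn] at ha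
      linarith
  have hbound : ∀ t : ℝ, 0 < t →
      μ {a : EuclideanSpace ℝ (Fin 2) | t ≤ e / ‖a‖} ≤ ENNReal.ofReal ((e / t) ^ 2) * A := by
    intro t ht
    calc μ {a | t ≤ e / ‖a‖} ≤ volume {a : EuclideanSpace ℝ (Fin 2) | t ≤ e / ‖a‖} :=
          Measure.restrict_le_self _
      _ ≤ volume (Metric.closedBall (0 : EuclideanSpace ℝ (Fin 2)) (e / t)) :=
          measure_mono (hsub t ht)
      _ = ENNReal.ofReal ((e / t) ^ Module.finrank ℝ (EuclideanSpace ℝ (Fin 2))) * A :=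
          Measure.addHaar_closedBall _ _ (by positivity)
      _ = ENNReal.ofReal ((e / t) ^ 2) * A := by norm_num
  calc (∫⁻ t in Ioi (0 : ℝ), μ {a | t ≤ e / ‖a‖})
      ≤ ∫⁻ t in Ioc (0 : ℝ) e ∪ Ioi e, μ {a | t ≤ e / ‖a‖} :=
        lintegral_mono_set Ioi_subset_Ioc_union_Ioi
    _ ≤ (∫⁻ t in Ioc (0 : ℝ) e, μ {a | t ≤ e / ‖a‖}) +
          ∫⁻ t in Ioi e, μ {a | t ≤ e / ‖a‖} := lintegral_union_le _ _ _
    _ < ⊤ := by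
        refine ENNReal.add_lt_top.2 ⟨?_, ?_⟩
        · calc (∫⁻ t in Ioc (0 : ℝ) e, μ {a | t ≤ e / ‖a‖})
              ≤ ∫⁻ _ in Ioc (0 : ℝ) e, A := by
                refine lintegral_mono fun t => ?_
                refine le_trans (measure_mono (subset_univ _)) ?_
                rw [hμ, Measure.restrict_apply_univ]
            _ = A * volume (Ioc (0 : ℝ) e) := setLIntegral_const _ _
            _ < ⊤ := ENNReal.mul_lt_top hA (by rw [Real.volume_Ioc]; exact ENNReal.ofReal_lt_top)
        · have hInt : IntegrableOn (fun t : ℝ => (e / t) ^ 2) (Ioi e) volume := by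
            have h1 : IntegrableOn (fun t : ℝ => e ^ 2 * t ^ (-2 : ℝ)) (Ioi e) volume :=
              (integrableOn_Ioi_rpow_of_lt (by norm_num) he).const_mul _
            refine h1.congr_fun (fun t ht => ?_) measurableSet_Ioi
            have ht0 : 0 < t := lt_trans he ht
            rw [div_pow]; beta_reduce; rw [Real.rpow_neg ht0.le, show ((2:ℝ) = ((2:ℕ):ℝ)) by norm_num,
              Real.rpow_natCast]
            ring
          calc (∫⁻ t in Ioi e, μ {a | t ≤ e / ‖a‖})
              ≤ ∫⁻ t in Ioi e, ENNReal.ofReal ((e / t) ^ 2) * A := by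
                refine setLIntegral_mono' measurableSet_Ioi fun t ht => ?_
                exact hbound t (lt_trans he ht)
            _ = (∫⁻ t in Ioi e, ENNReal.ofReal ((e / t) ^ 2)) * A :=
                lintegral_mul_const' _ _ hA.ne
            _ < ⊤ := ENNReal.mul_lt_top hInt.setLIntegral_lt_top hA

end ZhikovAux

open Set Metric

/-- Both `exp(ρ)` and `exp(1/ρ)` are Lebesgue-integrable on the unit ball
`B ⊆ ℝ²` for Zhikov's weight `ρ`; consequently `ρ` belongs to the Zhikov class `Z₂` on `B`. -/
theorem stmt15 :
    MeasureTheory.IntegrableOn (fun x => Real.exp (zhikovWeight x))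
      (Metric.ball (0 : EuclideanSpace ℝ (Fin 2)) 1) MeasureTheory.volume ∧
    MeasureTheory.IntegrableOn (fun x => Real.exp (1 / zhikovWeight x))
      (Metric.ball (0 : EuclideanSpace ℝ (Fin 2)) 1) MeasureTheory.volume ∧
    Lconst 2 (MeasureTheory.volume.restrict (Metric.ball (0 : EuclideanSpace ℝ (Fin 2)) 1))
      zhikovWeight < ⊤ := by
  set μ := volume.restrict (Metric.ball (0 : EuclideanSpace ℝ (Fin 2)) 1) with hμ
  -- a.e. facts
  have hae : ∀ᵐ x ∂μ, ‖x‖ < 1 ∧ x ≠ 0 := by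
    have h1 : ∀ᵐ x ∂μ, x ∈ Metric.ball (0 : EuclideanSpace ℝ (Fin 2)) 1 :=
      ae_restrict_mem measurableSet_ball
    have h2 : ∀ᵐ x : EuclideanSpace ℝ (Fin 2) ∂volume, x ≠ 0 := by
      rw [ae_iff]
      have hset : {a : EuclideanSpace ℝ (Fin 2) | ¬ a ≠ 0} = {0} := by ext a; simp
      rw [hset]
      exact measure_singleton 0
    filter_upwards [h1, ae_restrict_of_ae h2] with x hx hx0
    exact ⟨mem_ball_zero_iff.1 hx, hx0⟩
  -- the dominating function
  have hg : Integrable (fun x : EuclideanSpace ℝ (Fin 2) => Real.exp 1 / ‖x‖) μ := by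
    refine ⟨(measurable_const.div measurable_norm).aestronglyMeasurable, ?_⟩
    exact (hasFiniteIntegral_iff_ofReal
      (Filter.Eventually.of_forall fun x => by positivity)).2 finite_master
  have hI1 : MeasureTheory.Integrable (fun x => Real.exp (zhikovWeight x)) μ := by
    refine hg.mono' (Real.measurable_exp.comp zhikov_measurable).aestronglyMeasurable ?_
    filter_upwards [hae] with x hx
    rw [Real.norm_eq_abs, abs_of_pos (Real.exp_pos _)]
    exact (zhikov_exp_le hx.1 hx.2).1
  have hI2 : MeasureTheory.Integrable (fun x => Real.exp (1 / zhikovWeight x)) μ := by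
    refine hg.mono'
      (Real.measurable_exp.comp (measurable_const.div zhikov_measurable)).aestronglyMeasurable ?_
    filter_upwards [hae] with x hx
    rw [Real.norm_eq_abs, abs_of_pos (Real.exp_pos _)]
    exact (zhikov_exp_le hx.1 hx.2).2
  refine ⟨hI1, hI2, ?_⟩
  -- finiteness of the two exponential lintegrals
  have hC1 : (∫⁻ x, ENNReal.ofReal (Real.exp (zhikovWeight x)) ∂μ) < ⊤ := by
    rw [← hasFiniteIntegral_iff_ofReal
      (Filter.Eventually.of_forall fun x => (Real.exp_pos _).le)]
    exact hI1.2
  have hC2 : (∫⁻ x, ENNReal.ofReal (Real.exp (1 / zhikovWeight x)) ∂μ) < ⊤ := by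
    rw [← hasFiniteIntegral_iff_ofReal
      (Filter.Eventually.of_forall fun x => (Real.exp_pos _).le)]
    exact hI2.2
  set C1 := ∫⁻ x, ENNReal.ofReal (Real.exp (zhikovWeight x)) ∂μ with hC1_def
  set C2 := ∫⁻ x, ENNReal.ofReal (Real.exp (1 / zhikovWeight x)) ∂μ with hC2_def
  -- integral bounds
  have hJ1 : ∀ n : ℕ,
      (∫⁻ x, ENNReal.ofReal (zhikovWeight x ^ (n : ℝ)) ∂μ) ≤
        ENNReal.ofReal (n.factorial : ℝ) * C1 := by
    intro n
    rw [hC1_def, ← lintegral_const_mul' _ _ ENNReal.ofReal_ne_top]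
    refine lintegral_mono_ae ?_
    filter_upwards [hae] with x hx
    have hpos := zhikov_pos hx.1
    rw [← ENNReal.ofReal_mul (by positivity)]
    refine ENNReal.ofReal_le_ofReal ?_
    rw [Real.rpow_natCast]
    exact pow_le_factorial_mul_exp hpos.le n
  have hJ2 : ∀ n : ℕ,
      (∫⁻ x, ENNReal.ofReal (zhikovWeight x ^ (-(n : ℝ))) ∂μ) ≤
        ENNReal.ofReal (n.factorial : ℝ) * C2 := by
    intro n
    rw [hC2_def, ← lintegral_const_mul' _ _ ENNReal.ofReal_ne_top]
    refine lintegral_mono_ae ?_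
    filter_upwards [hae] with x hx
    have hpos := zhikov_pos hx.1
    rw [← ENNReal.ofReal_mul (by positivity)]
    refine ENNReal.ofReal_le_ofReal ?_
    rw [Real.rpow_neg hpos.le, Real.rpow_natCast, ← inv_pow, ← one_div]
    have : Real.exp (1 / zhikovWeight x) = Real.exp (1 / zhikovWeight x) := rfl
    exact pow_le_factorial_mul_exp (by positivity) n
  -- the key per-n bound
  set K := (1 ⊔ C1) * (1 ⊔ C2) with hK
  have hterm : ∀ n : ℕ, 1 ≤ n →
      ENNReal.ofReal ((n : ℝ) ^ (-(2:ℝ))) *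
        (∫⁻ x, ENNReal.ofReal (zhikovWeight x ^ (n : ℝ)) ∂μ) ^ ((n : ℝ)⁻¹) *
        (∫⁻ x, ENNReal.ofReal (zhikovWeight x ^ (-(n : ℝ))) ∂μ) ^ ((n : ℝ)⁻¹) ≤ K := by
    intro n hn
    have hn0 : (0:ℝ) < n := by exact_mod_cast hn
    have hne0 : ((n : ℕ) : ℝ≥0∞) ≠ 0 := by
      exact_mod_cast Nat.one_le_iff_ne_zero.1 hn
    have hinv_nonneg : (0:ℝ) ≤ ((n:ℝ))⁻¹ := by positivity
    have hF : (ENNReal.ofReal (n.factorial : ℝ)) ^ ((n:ℝ)⁻¹) ≤ ((n : ℕ) : ℝ≥0∞) := by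
      have hfact : ENNReal.ofReal (n.factorial : ℝ) ≤ ((n : ℕ) : ℝ≥0∞) ^ (n : ℕ) := by
        rw [← ENNReal.ofReal_natCast n, ← ENNReal.ofReal_pow (by positivity)]
        exact ENNReal.ofReal_le_ofReal (by exact_mod_cast Nat.factorial_le_pow n)
      calc (ENNReal.ofReal (n.factorial : ℝ)) ^ ((n:ℝ)⁻¹)
          ≤ (((n : ℕ) : ℝ≥0∞) ^ (n : ℕ)) ^ ((n:ℝ)⁻¹) :=
            ENNReal.rpow_le_rpow hfact hinv_nonneg
        _ = ((n : ℕ) : ℝ≥0∞) := by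
            rw [← ENNReal.rpow_natCast, ← ENNReal.rpow_mul,
              mul_inv_cancel₀ (by exact_mod_cast hn0.ne' : (n:ℝ) ≠ 0), ENNReal.rpow_one]
    have hsup : ∀ C : ℝ≥0∞, (1 ⊔ C) ^ ((n:ℝ)⁻¹) ≤ 1 ⊔ C := by
      intro C
      calc (1 ⊔ C) ^ ((n:ℝ)⁻¹) ≤ (1 ⊔ C) ^ (1:ℝ) :=
            ENNReal.rpow_le_rpow_of_exponent_le le_sup_left
              (by rw [inv_le_one₀ hn0]; exact_mod_cast hn)
        _ = 1 ⊔ C := ENNReal.rpow_one _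
    have hA : (∫⁻ x, ENNReal.ofReal (zhikovWeight x ^ (n : ℝ)) ∂μ) ^ ((n:ℝ)⁻¹)
        ≤ ((n : ℕ) : ℝ≥0∞) * (1 ⊔ C1) := by
      calc (∫⁻ x, ENNReal.ofReal (zhikovWeight x ^ (n : ℝ)) ∂μ) ^ ((n:ℝ)⁻¹)
          ≤ (ENNReal.ofReal (n.factorial : ℝ) * (1 ⊔ C1)) ^ ((n:ℝ)⁻¹) :=
            ENNReal.rpow_le_rpow (le_trans (hJ1 n) (mul_le_mul_right le_sup_right _)) hinv_nonneg
        _ = (ENNReal.ofReal (n.factorial : ℝ)) ^ ((n:ℝ)⁻¹) * (1 ⊔ C1) ^ ((n:ℝ)⁻¹) :=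
            ENNReal.mul_rpow_of_nonneg _ _ hinv_nonneg
        _ ≤ ((n : ℕ) : ℝ≥0∞) * (1 ⊔ C1) := mul_le_mul' hF (hsup C1)
    have hB : (∫⁻ x, ENNReal.ofReal (zhikovWeight x ^ (-(n : ℝ))) ∂μ) ^ ((n:ℝ)⁻¹)
        ≤ ((n : ℕ) : ℝ≥0∞) * (1 ⊔ C2) := by
      calc (∫⁻ x, ENNReal.ofReal (zhikovWeight x ^ (-(n : ℝ))) ∂μ) ^ ((n:ℝ)⁻¹)
          ≤ (ENNReal.ofReal (n.factorial : ℝ) * (1 ⊔ C2)) ^ ((n:ℝ)⁻¹) :=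
            ENNReal.rpow_le_rpow (le_trans (hJ2 n) (mul_le_mul_right le_sup_right _)) hinv_nonneg
        _ = (ENNReal.ofReal (n.factorial : ℝ)) ^ ((n:ℝ)⁻¹) * (1 ⊔ C2) ^ ((n:ℝ)⁻¹) :=
            ENNReal.mul_rpow_of_nonneg _ _ hinv_nonneg
        _ ≤ ((n : ℕ) : ℝ≥0∞) * (1 ⊔ C2) := mul_le_mul' hF (hsup C2)
    have hP : ENNReal.ofReal ((n : ℝ) ^ (-(2:ℝ))) = ((n : ℕ) : ℝ≥0∞) ^ (-(2:ℝ)) := by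
      rw [← ENNReal.ofReal_rpow_of_pos hn0, ENNReal.ofReal_natCast]
    have hnn1 : ((n : ℕ) : ℝ≥0∞) ^ (-(2:ℝ)) * ((n : ℕ) : ℝ≥0∞) * ((n : ℕ) : ℝ≥0∞) = 1 := by
      have h1 : ((n : ℕ) : ℝ≥0∞) = ((n : ℕ) : ℝ≥0∞) ^ (1:ℝ) := (ENNReal.rpow_one _).symm
      calc ((n : ℕ) : ℝ≥0∞) ^ (-(2:ℝ)) * ((n : ℕ) : ℝ≥0∞) * ((n : ℕ) : ℝ≥0∞)
          = ((n : ℕ) : ℝ≥0∞) ^ (-(2:ℝ) + 1 + 1) := by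
            rw [ENNReal.rpow_add _ _ hne0 (ENNReal.natCast_ne_top n),
              ENNReal.rpow_add _ _ hne0 (ENNReal.natCast_ne_top n), ← h1]
        _ = 1 := by norm_num
    calc ENNReal.ofReal ((n : ℝ) ^ (-(2:ℝ))) *
          (∫⁻ x, ENNReal.ofReal (zhikovWeight x ^ (n : ℝ)) ∂μ) ^ ((n : ℝ)⁻¹) *
          (∫⁻ x, ENNReal.ofReal (zhikovWeight x ^ (-(n : ℝ))) ∂μ) ^ ((n : ℝ)⁻¹)
        ≤ ((n : ℕ) : ℝ≥0∞) ^ (-(2:ℝ)) * (((n : ℕ) : ℝ≥0∞) * (1 ⊔ C1)) *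
            (((n : ℕ) : ℝ≥0∞) * (1 ⊔ C2)) := by
          rw [hP]; exact mul_le_mul' (mul_le_mul' le_rfl hA) hB
      _ = (((n : ℕ) : ℝ≥0∞) ^ (-(2:ℝ)) * ((n : ℕ) : ℝ≥0∞) * ((n : ℕ) : ℝ≥0∞)) *
            ((1 ⊔ C1) * (1 ⊔ C2)) := by ring
      _ = K := by rw [hnn1, one_mul, hK]
  -- conclude
  have hev : ∀ᶠ n : ℕ in atTop,
      (ENNReal.ofReal ((n : ℝ) ^ (-(2:ℝ))) *
        (∫⁻ x, ENNReal.ofReal (zhikovWeight x ^ (n : ℝ)) ∂μ) ^ ((n : ℝ)⁻¹) *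
        (∫⁻ x, ENNReal.ofReal (zhikovWeight x ^ (-(n : ℝ))) ∂μ) ^ ((n : ℝ)⁻¹)) ≤ K :=
    eventually_atTop.2 ⟨1, hterm⟩
  have hlim : Lconst 2 μ zhikovWeight ≤ K := by
    unfold Lconst
    calc Filter.liminf _ atTop ≤ Filter.liminf (fun _ : ℕ => K) atTop :=
          Filter.liminf_le_liminf hev
      _ = K := Filter.liminf_const K
  refine lt_of_le_of_lt hlim ?_
  exact ENNReal.mul_lt_top (sup_lt_iff.2 ⟨ENNReal.one_lt_top, hC1⟩)
    (sup_lt_iff.2 ⟨ENNReal.one_lt_top, hC2⟩)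
end

section
/- Let B := { x ∈ ℝ² : |x| < 1 } be the open unit ball with 2-dimensional Lebesgue measure, and define ρ : B → (0,∞) by ρ(x) := log(e/|x|) if x₁x₂ > 0, ρ(x) := 1/log(e/|x|) if x₁x₂ < 0, and ρ(x) := 1 if x₁x₂ = 0. Then for every p > 1, lim_{r→0⁺} ⨍_{B(0,r)} ρ dx = ∞ and lim_{r→0⁺} ⨍_{B(0,r)} ρ^{−1/(p−1)} dx = ∞, where ⨍_{B(0,r)} denotes the average with respect to Lebesgue measure over the ball B(0,r) ⊆ B (r < 1). In particular, for every p > 1, sup over open balls B' ⊆ B of ( ⨍_{B'} ρ dx )( ⨍_{B'} ρ^{−1/(p−1)} dx )^{p−1} = ∞, so ρ is not a Muckenhoupt A_p weight for any p > 1. -/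
open MeasureTheory Filter Topology
open scoped ENNReal NNReal

namespace ZW

open Metric Set

local notation "E2" => EuclideanSpace ℝ (Fin 2)

noncomputable def L (x : E2) : ℝ := Real.log (Real.exp 1 / ‖x‖)

lemma exp_pos' : (0:ℝ) < Real.exp 1 := Real.exp_pos 1

lemma L_ge_one {x : E2} (h0 : x ≠ 0) (h1 : ‖x‖ ≤ 1) : 1 ≤ L x := by
  have hn : 0 < ‖x‖ := norm_pos_iff.2 h0
  have h2 : Real.exp 1 ≤ Real.exp 1 / ‖x‖ := by
    rw [le_div_iff₀ hn]
    nlinarith [exp_pos']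
  calc (1:ℝ) = Real.log (Real.exp 1) := (Real.log_exp 1).symm
    _ ≤ L x := Real.log_le_log (Real.exp_pos 1) h2

lemma exp_L {x : E2} (h0 : x ≠ 0) : Real.exp (L x) = Real.exp 1 / ‖x‖ := by
  have hn : 0 < ‖x‖ := norm_pos_iff.2 h0
  exact Real.exp_log (div_pos exp_pos' hn)

lemma L_ge_log {x : E2} {r : ℝ} (h0 : x ≠ 0) (hr : ‖x‖ ≤ r) :
    Real.log (Real.exp 1 / r) ≤ L x := by
  have hn : 0 < ‖x‖ := norm_pos_iff.2 h0
  have hr0 : 0 < r := lt_of_lt_of_le hn hr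
  exact Real.log_le_log (div_pos exp_pos' hr0)
    (div_le_div_of_nonneg_left exp_pos'.le hn hr)

lemma measurable_L : Measurable L :=
  Real.measurable_log.comp (measurable_const.div continuous_norm.measurable)

lemma measurable_prod01 : Measurable fun x : E2 => x 0 * x 1 := by
  have h0 : Continuous fun x : E2 => x 0 := (EuclideanSpace.proj (0 : Fin 2)).continuous
  have h1 : Continuous fun x : E2 => x 1 := (EuclideanSpace.proj (1 : Fin 2)).continuous
  exact (h0.mul h1).measurable

lemma measurable_zw : Measurable zhikovWeight := by
  unfold zhikovWeight
  refine Measurable.ite (measurableSet_lt measurable_const measurable_prod01) measurable_L ?_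
  refine Measurable.ite (measurableSet_lt measurable_prod01 measurable_const) ?_ measurable_const
  exact (measurable_const.div measurable_L)

lemma zw_pos {x : E2} (h1 : ‖x‖ ≤ 1) : 0 < zhikovWeight x := by
  unfold zhikovWeight
  split_ifs with h h'
  · have h0 : x ≠ 0 := by
      intro hx; rw [hx] at h; simp at h
    show (0:ℝ) < L x
    linarith [L_ge_one h0 h1]
  · have h0 : x ≠ 0 := by
      intro hx; rw [hx] at h'; simp at h'
    have := L_ge_one h0 h1
    show (0:ℝ) < 1 / L x
    positivity
  · norm_num

lemma zw_le_L {x : E2} (h0 : x ≠ 0) (h1 : ‖x‖ ≤ 1) : zhikovWeight x ≤ L x := by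
  have hL := L_ge_one h0 h1
  unfold zhikovWeight
  split_ifs with h h'
  · exact le_refl _
  · show 1 / L x ≤ L x
    calc 1 / L x ≤ 1 := by
          rw [div_le_one (by linarith)]; linarith
      _ ≤ L x := hL
  · exact hL

lemma zw_rpow_le {x : E2} (h0 : x ≠ 0) (h1 : ‖x‖ ≤ 1) {q : ℝ} (hq : 0 ≤ q) :
    zhikovWeight x ^ (-q) ≤ L x ^ q := by
  have hL := L_ge_one h0 h1
  have hL0 : (0:ℝ) < L x := by linarith
  have h1q : (1:ℝ) ≤ L x ^ q := Real.one_le_rpow hL hq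
  unfold zhikovWeight
  split_ifs with h h'
  · show (L x) ^ (-q) ≤ L x ^ q
    calc (L x) ^ (-q) ≤ 1 := Real.rpow_le_one_of_one_le_of_nonpos hL (by linarith)
      _ ≤ L x ^ q := h1q
  · show (1 / L x) ^ (-q) ≤ L x ^ q
    rw [one_div, Real.inv_rpow hL0.le, ← Real.rpow_neg hL0.le, neg_neg]
  · rw [Real.one_rpow]; exact h1q

end ZW

namespace ZW2
open Metric Set ZW

local notation "E2" => EuclideanSpace ℝ (Fin 2)

lemma abs_coord_le (x : E2) (i : Fin 2) : |x i| ≤ ‖x‖ := by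
  have hsum : ‖x‖ = Real.sqrt ((x 0)^2 + (x 1)^2) := by
    rw [EuclideanSpace.norm_eq]
    congr 1
    simp [Fin.sum_univ_two, Real.norm_eq_abs, sq_abs]
  rw [hsum, show |x i| = Real.sqrt ((x i)^2) by rw [Real.sqrt_sq_eq_abs]]
  apply Real.sqrt_le_sqrt
  fin_cases i <;> simp <;> nlinarith [sq_nonneg (x 0), sq_nonneg (x 1)]

lemma mul_abs_le_sq_norm (x : E2) : |x 0| * |x 1| ≤ ‖x‖ ^ 2 := by
  have hsum : ‖x‖^2 = (x 0)^2 + (x 1)^2 := by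
    rw [EuclideanSpace.norm_eq, Real.sq_sqrt (by positivity)]
    simp [Fin.sum_univ_two, Real.norm_eq_abs, sq_abs]
  nlinarith [sq_nonneg (|x 0| - |x 1|), sq_abs (x 0), sq_abs (x 1)]

lemma oneD : IntegrableOn (fun t : ℝ => |t| ^ (-(1/2) : ℝ)) (Set.Ioc (-1:ℝ) 1) volume := by
  have h01 : IntervalIntegrable (fun t : ℝ => |t| ^ (-(1/2):ℝ)) volume 0 1 := by
    rw [intervalIntegrable_iff_integrableOn_Ioc_of_le zero_le_one]
    have h := intervalIntegral.intervalIntegrable_rpow' (a := 0) (b := 1)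
      (r := (-(1/2):ℝ)) (by norm_num)
    rw [intervalIntegrable_iff_integrableOn_Ioc_of_le zero_le_one] at h
    exact h.congr_fun (fun t ht => by rw [abs_of_pos ht.1]) measurableSet_Ioc
  have hneg : IntervalIntegrable (fun t : ℝ => |t| ^ (-(1/2):ℝ)) volume 0 (-1) := by
    have h := (IntervalIntegrable.iff_comp_neg (by simp)).mp h01
    simpa [abs_neg] using h
  have h := (hneg.symm).trans h01
  rwa [intervalIntegrable_iff_integrableOn_Ioc_of_le (by norm_num : (-1:ℝ) ≤ 1)] at h

lemma coord_ae (i : Fin 2) : ∀ᵐ x : E2 ∂volume, x i ≠ 0 := by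
  have hset : {x : E2 | x i = 0} =
      (LinearMap.ker ((EuclideanSpace.proj i : E2 →L[ℝ] ℝ) : E2 →ₗ[ℝ] ℝ) : Set E2) := by
    ext x
    simp [LinearMap.mem_ker]
  have hne : (LinearMap.ker ((EuclideanSpace.proj i : E2 →L[ℝ] ℝ) : E2 →ₗ[ℝ] ℝ)) ≠ ⊤ := by
    intro h
    have h2 := LinearMap.ker_eq_top.mp h
    have h3 : (EuclideanSpace.proj i : E2 →L[ℝ] ℝ) (EuclideanSpace.single i 1) = 1 := by
      simp
    rw [show ((EuclideanSpace.proj i : E2 →L[ℝ] ℝ) (EuclideanSpace.single i 1)) =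
      (((EuclideanSpace.proj i : E2 →L[ℝ] ℝ) : E2 →ₗ[ℝ] ℝ) (EuclideanSpace.single i 1)) from rfl,
      h2] at h3
    simp at h3
  have hnull : volume {x : E2 | x i = 0} = 0 := by
    rw [hset]
    exact MeasureTheory.Measure.addHaar_submodule volume _ hne
  rw [ae_iff]
  simpa [not_not] using hnull

noncomputable def g : ℝ → ℝ :=
  Set.indicator (Set.Ioc (-1:ℝ) 1) (fun t => |t| ^ (-(1/2):ℝ))

lemma g_int : Integrable g volume := by
  rw [g, integrable_indicator_iff measurableSet_Ioc]
  exact oneD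

lemma G_int : Integrable (fun y : Fin 2 → ℝ => ∏ i, g (y i)) volume :=
  Integrable.fintype_prod (fun _ => g_int)

lemma G_int_E : Integrable (fun x : E2 => ∏ i, g (x i)) volume := by
  have h := EuclideanSpace.volume_preserving_symm_measurableEquiv_toLp (Fin 2)
  have h2 := (h.integrable_comp_emb
    (MeasurableEquiv.toLp 2 (Fin 2 → ℝ)).symm.measurableEmbedding).mpr G_int
  exact h2

lemma twoD {r : ℝ} (hr : r ≤ 1) :
    IntegrableOn (fun x : E2 => ‖x‖⁻¹) (ball 0 r) volume := by
  apply Integrable.mono' (G_int_E.integrableOn)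
    ((measurable_norm.inv).aestronglyMeasurable)
  filter_upwards [ae_restrict_mem measurableSet_ball,
    ae_restrict_of_ae (coord_ae 0), ae_restrict_of_ae (coord_ae 1)] with x hx h0 h1
  have hxr : ‖x‖ < 1 := lt_of_lt_of_le (by simpa using hx) hr
  have hmem : ∀ i : Fin 2, x i ∈ Set.Ioc (-1:ℝ) 1 := by
    intro i
    have h := abs_lt.mp (lt_of_le_of_lt (abs_coord_le x i) hxr)
    exact ⟨h.1, h.2.le⟩
  have hG : (∏ i, g (x i)) = |x 0| ^ (-(1/2):ℝ) * |x 1| ^ (-(1/2):ℝ) := by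
    rw [Fin.prod_univ_two, g, Set.indicator_of_mem (hmem 0), Set.indicator_of_mem (hmem 1)]
  rw [hG, Real.norm_eq_abs, Pi.inv_apply, abs_of_nonneg (inv_nonneg.mpr (norm_nonneg x))]
  have habs0 : (0:ℝ) < |x 0| := abs_pos.mpr h0
  have habs1 : (0:ℝ) < |x 1| := abs_pos.mpr h1
  have hle : (|x 0| * |x 1|) ^ ((1:ℝ)/2) ≤ ‖x‖ := by
    have h2 := Real.rpow_le_rpow (by positivity) (mul_abs_le_sq_norm x)
      (by norm_num : (0:ℝ) ≤ 1/2)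
    calc (|x 0| * |x 1|) ^ ((1:ℝ)/2) ≤ (‖x‖^2) ^ ((1:ℝ)/2) := h2
      _ = ‖x‖ := by
        rw [← Real.rpow_natCast ‖x‖ 2, ← Real.rpow_mul (norm_nonneg _)]
        norm_num
  have hpos : (0:ℝ) < (|x 0| * |x 1|) ^ ((1:ℝ)/2) := Real.rpow_pos_of_pos (by positivity) _
  calc ‖x‖⁻¹ ≤ ((|x 0| * |x 1|) ^ ((1:ℝ)/2))⁻¹ := by
        apply inv_anti₀ hpos hle
    _ = (|x 0| * |x 1|) ^ (-(1/2):ℝ) := by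
        rw [← Real.rpow_neg (by positivity)]
    _ = |x 0| ^ (-(1/2):ℝ) * |x 1| ^ (-(1/2):ℝ) := by
        rw [Real.mul_rpow (abs_nonneg _) (abs_nonneg _)]

end ZW2

namespace ZW3
open Metric Set ZW ZW2

local notation "E2" => EuclideanSpace ℝ (Fin 2)

lemma L_pow_le {x : E2} (h0 : x ≠ 0) (h1 : ‖x‖ ≤ 1) (n : ℕ) :
    L x ^ (n:ℝ) ≤ (n.factorial : ℝ) * Real.exp 1 * ‖x‖⁻¹ := by
  have hL1 := L_ge_one h0 h1
  have hfac : (0:ℝ) < (n.factorial : ℝ) := by positivity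
  have key : L x ^ n ≤ (n.factorial : ℝ) * Real.exp (L x) := by
    have h := Real.pow_div_factorial_le_exp (L x) (by linarith) n
    rw [div_le_iff₀ hfac] at h
    linarith
  rw [Real.rpow_natCast]
  calc L x ^ n ≤ (n.factorial : ℝ) * Real.exp (L x) := key
    _ = (n.factorial : ℝ) * (Real.exp 1 / ‖x‖) := by rw [exp_L h0]
    _ = (n.factorial : ℝ) * Real.exp 1 * ‖x‖⁻¹ := by ring

lemma ne_zero_of_coord {x : E2} (h : x 0 ≠ 0) : x ≠ 0 := by
  intro hx
  apply h
  rw [hx]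
  rfl

lemma key_int {f : E2 → ℝ} (hm : Measurable f) {C r : ℝ} (hr : r ≤ 1)
    (hb : ∀ᵐ x ∂(volume.restrict (ball (0:E2) r)), ‖f x‖ ≤ C * ‖x‖⁻¹) :
    IntegrableOn f (ball (0:E2) r) volume :=
  Integrable.mono' ((twoD hr).const_mul C) hm.aestronglyMeasurable hb

lemma int_zw {r : ℝ} (hr : r ≤ 1) : IntegrableOn zhikovWeight (ball (0:E2) r) volume := by
  apply key_int measurable_zw hr (C := Real.exp 1)
  filter_upwards [ae_restrict_mem measurableSet_ball,
    ae_restrict_of_ae (coord_ae 0)] with x hx h0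
  have hx0 : x ≠ 0 := ne_zero_of_coord h0
  have hx1 : ‖x‖ ≤ 1 := le_trans (le_of_lt (by simpa using hx)) hr
  have hpos := zw_pos (x := x) hx1
  rw [Real.norm_eq_abs, abs_of_pos hpos]
  calc zhikovWeight x ≤ L x := zw_le_L hx0 hx1
    _ = L x ^ ((1:ℕ):ℝ) := by norm_num
    _ ≤ ((1:ℕ).factorial : ℝ) * Real.exp 1 * ‖x‖⁻¹ := L_pow_le hx0 hx1 1
    _ = Real.exp 1 * ‖x‖⁻¹ := by norm_num

lemma int_zw_rpow {r q : ℝ} (hr : r ≤ 1) (hq : 0 ≤ q) :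
    IntegrableOn (fun x => zhikovWeight x ^ (-q)) (ball (0:E2) r) volume := by
  set n : ℕ := max 1 ⌈q⌉₊ with hn
  have hn1 : (1:ℕ) ≤ n := le_max_left _ _
  have hqn : q ≤ (n:ℝ) := le_trans (Nat.le_ceil q) (by exact_mod_cast le_max_right 1 ⌈q⌉₊)
  have hzw := measurable_zw
  apply key_int (by fun_prop : Measurable fun x : EuclideanSpace ℝ (Fin 2) => zhikovWeight x ^ (-q)) hr (C := (n.factorial : ℝ) * Real.exp 1)
  filter_upwards [ae_restrict_mem measurableSet_ball,
    ae_restrict_of_ae (coord_ae 0)] with x hx h0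
  have hx0 : x ≠ 0 := ne_zero_of_coord h0
  have hx1 : ‖x‖ ≤ 1 := le_trans (le_of_lt (by simpa using hx)) hr
  have hpos := zw_pos (x := x) hx1
  have hL1 := L_ge_one hx0 hx1
  rw [Real.norm_eq_abs, abs_of_nonneg (Real.rpow_nonneg hpos.le _)]
  calc zhikovWeight x ^ (-q) ≤ L x ^ q := zw_rpow_le hx0 hx1 hq
    _ ≤ L x ^ ((n:ℕ):ℝ) := Real.rpow_le_rpow_of_exponent_le hL1 hqn
    _ ≤ (n.factorial : ℝ) * Real.exp 1 * ‖x‖⁻¹ := L_pow_le hx0 hx1 n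

lemma avg_ge {f : E2 → ℝ} {r c : ℝ} (hr : 0 < r) (hc : 0 ≤ c)
    (hf : IntegrableOn f (ball (0:E2) r) volume)
    (hpos : ∀ᵐ x ∂(volume.restrict (ball (0:E2) r)), 0 ≤ f x)
    {z : E2} (hz : ball z (r/8) ⊆ ball (0:E2) r)
    (hS : ∀ x ∈ ball z (r/8), c ≤ f x) :
    c / 64 ≤ ⨍ x in ball (0:E2) r, f x ∂volume := by
  set B1 := (volume (ball (0:E2) 1)).toReal with hB1def
  have hB1 : 0 < B1 :=
    ENNReal.toReal_pos (measure_ball_pos volume 0 one_pos).ne' measure_ball_lt_top.ne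
  have hfr : Module.finrank ℝ (EuclideanSpace ℝ (Fin 2)) = 2 := by simp
  have hball : (volume (ball (0:E2) r)).toReal = r^2 * B1 := by
    rw [MeasureTheory.Measure.addHaar_ball volume 0 hr.le, ENNReal.toReal_mul,
      ENNReal.toReal_ofReal (by positivity), hfr]
  have hsmall : (volume (ball z (r/8))).toReal = (r/8)^2 * B1 := by
    rw [MeasureTheory.Measure.addHaar_ball volume z (by positivity : (0:ℝ) ≤ r/8),
      ENNReal.toReal_mul, ENNReal.toReal_ofReal (by positivity), hfr]
  have hIsub : c * ((r/8)^2 * B1) ≤ ∫ x in ball z (r/8), f x ∂volume := by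
    have hconst : ∫ _x in ball z (r/8), c ∂volume = c * ((r/8)^2 * B1) := by
      rw [setIntegral_const, measureReal_def, hsmall, smul_eq_mul]
      ring
    rw [← hconst]
    have hconst_int : IntegrableOn (fun _ : E2 => c) (ball z (r/8)) volume :=
      integrableOn_const measure_ball_lt_top.ne
    exact setIntegral_mono_on hconst_int (hf.mono_set hz) measurableSet_ball hS
  have hI : ∫ x in ball z (r/8), f x ∂volume ≤ ∫ x in ball (0:E2) r, f x ∂volume :=
    setIntegral_mono_set hf hpos (HasSubset.Subset.eventuallyLE hz)
  rw [setAverage_eq, measureReal_def, hball, smul_eq_mul]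
  have h1 : (r^2 * B1) ≠ 0 := by positivity
  have heq : c / 64 = (r^2 * B1)⁻¹ * (c * ((r/8)^2 * B1)) := by
    rw [show c * ((r/8)^2 * B1) = c/64 * (r^2*B1) by ring, mul_comm (c/64),
      ← mul_assoc, inv_mul_cancel₀ h1, one_mul]
  rw [heq]
  apply mul_le_mul_of_nonneg_left (le_trans hIsub hI)
  positivity

end ZW3

namespace ZW4
open Metric Set ZW ZW2 ZW3

local notation "E2" => EuclideanSpace ℝ (Fin 2)

noncomputable def z1 (r : ℝ) : E2 := WithLp.toLp 2 (fun _ => r/4)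
noncomputable def z2 (r : ℝ) : E2 := WithLp.toLp 2 (fun i : Fin 2 => if i = 0 then r/4 else -(r/4))

lemma norm_z1 {r : ℝ} (hr : 0 ≤ r) : ‖z1 r‖ ≤ r/2 := by
  have h : ‖z1 r‖ = Real.sqrt ((r/4)^2 + (r/4)^2) := by
    rw [EuclideanSpace.norm_eq]
    congr 1
    simp [Fin.sum_univ_two, Real.norm_eq_abs, sq_abs, z1, abs_of_nonneg (by linarith : (0:ℝ) ≤ r/4), sq_abs r]
    rw [abs_of_nonneg hr]
    ring
  rw [h]
  calc Real.sqrt ((r/4)^2 + (r/4)^2) ≤ Real.sqrt ((r/2)^2) :=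
      Real.sqrt_le_sqrt (by nlinarith)
    _ = r/2 := Real.sqrt_sq (by linarith)

lemma norm_z2 {r : ℝ} (hr : 0 ≤ r) : ‖z2 r‖ ≤ r/2 := by
  have h : ‖z2 r‖ = Real.sqrt ((r/4)^2 + (r/4)^2) := by
    rw [EuclideanSpace.norm_eq]
    congr 1
    simp [Fin.sum_univ_two, Real.norm_eq_abs, sq_abs, z2]
    ring
  rw [h]
  calc Real.sqrt ((r/4)^2 + (r/4)^2) ≤ Real.sqrt ((r/2)^2) :=
      Real.sqrt_le_sqrt (by nlinarith)
    _ = r/2 := Real.sqrt_sq (by linarith)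

lemma coord_close {z y : E2} {s : ℝ} (hy : y ∈ ball z s) (i : Fin 2) :
    |y i - z i| < s := by
  rw [mem_ball_iff_norm] at hy
  exact lt_of_le_of_lt (by simpa using abs_coord_le (y - z) i) hy

lemma ball_sub {r : ℝ} (hr : 0 < r) {z : E2} (hz : ‖z‖ ≤ r/2) :
    ball z (r/8) ⊆ ball (0:E2) r := by
  intro y hy
  rw [mem_ball_zero_iff]
  rw [mem_ball_iff_norm] at hy
  calc ‖y‖ = ‖y - z + z‖ := by rw [sub_add_cancel]
    _ ≤ ‖y - z‖ + ‖z‖ := norm_add_le _ _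
    _ < r/8 + r/2 := by linarith
    _ ≤ r := by linarith

lemma mem_z1 {r : ℝ} (hr : 0 < r) {y : E2} (hy : y ∈ ball (z1 r) (r/8)) :
    0 < y 0 * y 1 ∧ y ≠ 0 := by
  have h0 := coord_close hy 0
  have h1 := coord_close hy 1
  have hz0 : z1 r 0 = r/4 := rfl
  have hz1 : z1 r 1 = r/4 := rfl
  rw [hz0] at h0; rw [hz1] at h1
  have hy0 : 0 < y 0 := by cases' abs_lt.mp h0 with a b; linarith
  have hy1 : 0 < y 1 := by cases' abs_lt.mp h1 with a b; linarith
  exact ⟨mul_pos hy0 hy1, ne_zero_of_coord hy0.ne'⟩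

lemma mem_z2 {r : ℝ} (hr : 0 < r) {y : E2} (hy : y ∈ ball (z2 r) (r/8)) :
    y 0 * y 1 < 0 ∧ y ≠ 0 := by
  have h0 := coord_close hy 0
  have h1 := coord_close hy 1
  have hz0 : z2 r 0 = r/4 := rfl
  have hz1 : z2 r 1 = -(r/4) := rfl
  rw [hz0] at h0; rw [hz1] at h1
  have hy0 : 0 < y 0 := by cases' abs_lt.mp h0 with a b; linarith
  have hy1 : y 1 < 0 := by cases' abs_lt.mp h1 with a b; linarith
  exact ⟨mul_neg_of_pos_of_neg hy0 hy1, ne_zero_of_coord hy0.ne'⟩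

lemma one_le_exp_one : (1:ℝ) ≤ Real.exp 1 := by
  nlinarith [Real.add_one_le_exp (1:ℝ)]

lemma log_er_nonneg {r : ℝ} (hr0 : 0 < r) (hr1 : r ≤ 1) :
    0 ≤ Real.log (Real.exp 1 / r) :=
  Real.log_nonneg ((one_le_div hr0).mpr (hr1.trans one_le_exp_one))

lemma avg1 {r : ℝ} (hr0 : 0 < r) (hr1 : r ≤ 1) :
    Real.log (Real.exp 1 / r) / 64 ≤ ⨍ x in ball (0:E2) r, zhikovWeight x ∂volume := by
  apply avg_ge hr0 (log_er_nonneg hr0 hr1) (int_zw hr1) ?_ (ball_sub hr0 (norm_z1 hr0.le)) ?_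
  · filter_upwards [ae_restrict_mem measurableSet_ball] with x hx
    exact (zw_pos (le_trans (le_of_lt (by simpa using hx)) hr1)).le
  · intro x hx
    obtain ⟨hq, hne⟩ := mem_z1 hr0 hx
    have hxr : ‖x‖ < r := by
      have := ball_sub hr0 (norm_z1 hr0.le) hx
      simpa using this
    show Real.log (Real.exp 1 / r) ≤ zhikovWeight x
    unfold zhikovWeight
    rw [if_pos hq]
    exact L_ge_log hne hxr.le

lemma avg2 {r q : ℝ} (hr0 : 0 < r) (hr1 : r ≤ 1) (hq : 0 ≤ q) :
    Real.log (Real.exp 1 / r) ^ q / 64 ≤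
      ⨍ x in ball (0:E2) r, zhikovWeight x ^ (-q) ∂volume := by
  have hlog := log_er_nonneg hr0 hr1
  apply avg_ge hr0 (Real.rpow_nonneg hlog q) (int_zw_rpow hr1 hq) ?_
    (ball_sub hr0 (norm_z2 hr0.le)) ?_
  · filter_upwards [ae_restrict_mem measurableSet_ball] with x hx
    exact Real.rpow_nonneg (zw_pos (le_trans (le_of_lt (by simpa using hx)) hr1)).le _
  · intro x hx
    obtain ⟨hneg, hne⟩ := mem_z2 hr0 hx
    have hxr : ‖x‖ < r := by
      have := ball_sub hr0 (norm_z2 hr0.le) hx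
      simpa using this
    have hL1 : 1 ≤ L x := L_ge_one hne (hxr.le.trans hr1)
    have hL0 : (0:ℝ) < L x := by linarith
    show Real.log (Real.exp 1 / r) ^ q ≤ zhikovWeight x ^ (-q)
    unfold zhikovWeight
    rw [if_neg (not_lt.mpr hneg.le), if_pos hneg]
    have : (1 / L x) ^ (-q) = L x ^ q := by
      rw [one_div, Real.inv_rpow hL0.le, ← Real.rpow_neg hL0.le, neg_neg]
    show Real.log (Real.exp 1 / r) ^ q ≤ (1 / L x) ^ (-q)
    rw [this]
    exact Real.rpow_le_rpow hlog (L_ge_log hne hxr.le) hq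

lemma tendsto_log_er :
    Filter.Tendsto (fun r : ℝ => Real.log (Real.exp 1 / r)) (nhdsWithin 0 (Set.Ioi 0))
      Filter.atTop := by
  have h2 : Filter.Tendsto (fun r : ℝ => -Real.log r) (nhdsWithin 0 (Set.Ioi 0))
      Filter.atTop :=
    tendsto_neg_atBot_atTop.comp Real.tendsto_log_nhdsGT_zero
  have h1 : Filter.Tendsto (fun r : ℝ => 1 + -Real.log r) (nhdsWithin 0 (Set.Ioi 0))
      Filter.atTop := tendsto_atTop_add_const_left _ 1 h2
  apply Filter.Tendsto.congr' _ h1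
  filter_upwards [self_mem_nhdsWithin] with r hr
  rw [Real.log_div (Real.exp_ne_zero 1) (ne_of_gt hr), Real.log_exp]
  ring

lemma T1 : Filter.Tendsto
    (fun r : ℝ => ⨍ x in ball (0:E2) r, zhikovWeight x ∂volume)
    (nhdsWithin 0 (Set.Ioi 0)) Filter.atTop := by
  apply tendsto_atTop_mono' _ ?_ (tendsto_log_er.atTop_div_const (by norm_num : (0:ℝ) < 64))
  filter_upwards [Ioo_mem_nhdsGT_of_mem (Set.left_mem_Ico.mpr one_pos)] with r hr
  exact avg1 hr.1 hr.2.le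

lemma T2 {q : ℝ} (hq : 0 < q) : Filter.Tendsto
    (fun r : ℝ => ⨍ x in ball (0:E2) r, zhikovWeight x ^ (-q) ∂volume)
    (nhdsWithin 0 (Set.Ioi 0)) Filter.atTop := by
  apply tendsto_atTop_mono' _ ?_
    (((tendsto_rpow_atTop hq).comp tendsto_log_er).atTop_div_const (by norm_num : (0:ℝ) < 64))
  filter_upwards [Ioo_mem_nhdsGT_of_mem (Set.left_mem_Ico.mpr one_pos)] with r hr
  exact avg2 hr.1 hr.2.le hq.le

end ZW4

/-- For Zhikov's weight `ρ` on the unit ball `B ⊆ ℝ²` and every `p > 1`,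
the averages of `ρ` and of `ρ^{−1/(p−1)}` over `B(0,r)` tend to `∞` as `r → 0⁺`; in
particular, for every `p > 1` the Muckenhoupt `A_p` quantity over balls contained in `B` is
unbounded, so `ρ` is not an `A_p` weight for any `p > 1`. -/
theorem stmt16 :
    (∀ p : ℝ, 1 < p →
      Filter.Tendsto
        (fun r : ℝ =>
          ⨍ x in Metric.ball (0 : EuclideanSpace ℝ (Fin 2)) r, zhikovWeight x
            ∂MeasureTheory.volume)
        (nhdsWithin 0 (Set.Ioi 0)) Filter.atTop ∧
      Filter.Tendsto
        (fun r : ℝ =>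
          ⨍ x in Metric.ball (0 : EuclideanSpace ℝ (Fin 2)) r,
            zhikovWeight x ^ (-1 / (p - 1)) ∂MeasureTheory.volume)
        (nhdsWithin 0 (Set.Ioi 0)) Filter.atTop) ∧
    (∀ p : ℝ, 1 < p → ∀ K : ℝ,
      ∃ (z : EuclideanSpace ℝ (Fin 2)) (s : ℝ), 0 < s ∧
        Metric.ball z s ⊆ Metric.ball (0 : EuclideanSpace ℝ (Fin 2)) 1 ∧
        K < (⨍ x in Metric.ball z s, zhikovWeight x ∂MeasureTheory.volume) *
          (⨍ x in Metric.ball z s, zhikovWeight x ^ (-1 / (p - 1))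
            ∂MeasureTheory.volume) ^ (p - 1)) := by
  have hT2 : ∀ p : ℝ, 1 < p → Filter.Tendsto
      (fun r : ℝ => ⨍ x in Metric.ball (0 : EuclideanSpace ℝ (Fin 2)) r,
        zhikovWeight x ^ (-1 / (p - 1)) ∂MeasureTheory.volume)
      (nhdsWithin 0 (Set.Ioi 0)) Filter.atTop := by
    intro p hp
    have hq : (0:ℝ) < 1/(p-1) := div_pos one_pos (by linarith)
    have h := ZW4.T2 hq
    simpa [neg_div] using h
  refine ⟨fun p hp => ⟨ZW4.T1, hT2 p hp⟩, fun p hp K => ?_⟩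
  have h1 := ZW4.T1.eventually_ge_atTop (|K| + 1)
  have h2 := (hT2 p hp).eventually_ge_atTop 1
  have h3 : ∀ᶠ r in nhdsWithin (0:ℝ) (Set.Ioi 0), r ∈ Set.Ioo (0:ℝ) 1 :=
    Filter.eventually_of_mem (Ioo_mem_nhdsGT_of_mem (Set.left_mem_Ico.mpr one_pos))
      fun x hx => hx
  obtain ⟨r, ⟨hA, hB⟩, hr⟩ := ((h1.and h2).and h3).exists
  refine ⟨0, r, hr.1, Metric.ball_subset_ball hr.2.le, ?_⟩
  have hA0 : (0:ℝ) ≤ ⨍ x in Metric.ball (0 : EuclideanSpace ℝ (Fin 2)) r,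
      zhikovWeight x ∂MeasureTheory.volume := le_trans (by positivity) hA
  have hBp : 1 ≤ (⨍ x in Metric.ball (0 : EuclideanSpace ℝ (Fin 2)) r,
      zhikovWeight x ^ (-1 / (p - 1)) ∂MeasureTheory.volume) ^ (p-1) :=
    Real.one_le_rpow hB (by linarith)
  calc K ≤ |K| := le_abs_self K
    _ < |K| + 1 := by linarith
    _ ≤ _ := hA
    _ = _ * 1 := (mul_one _).symm
    _ ≤ _ := mul_le_mul_of_nonneg_left hBp hA0
end
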